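/- arXiv:2011.09385 — 5 statements merged into one kernel-verified Lean document; each statement's English description precedes it below -/
import Mathlib

section
/- Let G be a graph with non-backtracking matrix B, and let Ĝ be obtained by identifying one vertex of G with one vertex of a tree T on n vertices. Then the characteristic polynomial of the non-backtracking matrix B̂ of Ĝ equals λ^{2(n−1)} times the characteristic polynomial of B; i.e., the spectrum of B̂ is the spectrum of B together with eigenvalue 0 of multiplicity 2(n−1). -/
open Matrix Polynomial

/-- The non-backtracking matrix of a simple graph, indexed by darts. -/
def nbMatrix {V : Type*} [Fintype V] [DecidableEq V] (G : SimpleGraph V)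
    [DecidableRel G.Adj] : Matrix G.Dart G.Dart ℂ :=
  Matrix.of fun d e => if d.toProd.2 = e.toProd.1 ∧ d.toProd.1 ≠ e.toProd.2 then 1 else 0

/-- The one-point union of `G` and `T`, identifying the vertex `g` of `G` with the
vertex `t` of `T`. -/
def onePointUnion {V U : Type*} (G : SimpleGraph V) (T : SimpleGraph U) (g : V) (t : U) :
    SimpleGraph (V ⊕ {u : U // u ≠ t}) :=
  SimpleGraph.fromRel fun x y =>
    match x, y with
    | Sum.inl a, Sum.inl b => G.Adj a b
    | Sum.inl a, Sum.inr b => a = g ∧ T.Adj t b.1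
    | Sum.inr a, Sum.inl b => b = g ∧ T.Adj t a.1
    | Sum.inr a, Sum.inr b => T.Adj a.1 b.1

namespace OPUaux

open SimpleGraph
section tree

variable {U : Type*} [DecidableEq U] {T : SimpleGraph U} {t : U}

lemma tree_path_length (hT : T.IsTree) {u : U} {p : T.Walk t u} (hp : p.IsPath) :
    p.length = T.dist t u := by
  obtain ⟨q, hq, hql⟩ := hT.isConnected.exists_path_of_dist t u
  rw [(hT.existsUnique_path t u).unique hp hq, hql]

lemma mem_support_path (hT : T.IsTree) {c a : U} {q : T.Walk t c} (hq : q.IsPath)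
    (hm : a ∈ q.support) : T.dist t a < T.dist t c ∨ a = c := by
  have h1 : (q.takeUntil a hm).IsPath := hq.takeUntil hm
  have hl : (q.takeUntil a hm).length = T.dist t a := tree_path_length hT h1
  have hql : q.length = T.dist t c := tree_path_length hT hq
  have hle := q.length_takeUntil_le hm
  have hca : T.dist t a ≤ T.dist t c := by omega
  rcases hca.lt_or_eq with h | h
  · exact Or.inl h
  · right
    have hspec := q.take_spec hm
    have hadd : (q.takeUntil a hm).length + (q.dropUntil a hm).length = q.length := by
      conv_rhs => rw [← hspec]
      rw [Walk.length_append]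
    have h0 : (q.dropUntil a hm).length = 0 := by omega
    exact Walk.eq_of_length_eq_zero h0

lemma concat_isPath (hT : T.IsTree) {c a : U} {q : T.Walk t c} (hq : q.IsPath)
    (h : T.Adj c a) (hns : a ∉ q.support) : (q.concat h).IsPath := by
  rw [← Walk.isPath_reverse_iff, Walk.reverse_concat]
  exact (hq.reverse).cons (by simpa [Walk.support_reverse] using hns)

lemma tree_adj_dist_ne (hT : T.IsTree) {a c : U} (h : T.Adj a c) :
    T.dist t a ≠ T.dist t c := by
  intro heq
  obtain ⟨q, hq, hql⟩ := hT.isConnected.exists_path_of_dist t c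
  have hns : a ∉ q.support := by
    intro hm
    rcases mem_support_path hT hq hm with h' | h'
    · omega
    · exact h.ne h'
  have hp : (q.concat h.symm).IsPath := concat_isPath hT hq h.symm hns
  have hl := tree_path_length hT hp
  rw [Walk.length_concat] at hl
  omega

lemma tree_parent_unique (hT : T.IsTree) {m x y : U} (hx : T.Adj m x) (hy : T.Adj m y)
    (hdx : T.dist t x < T.dist t m) (hdy : T.dist t y < T.dist t m) : x = y := by
  obtain ⟨q, hq, hql⟩ := hT.isConnected.exists_path_of_dist t x
  obtain ⟨r, hr, hrl⟩ := hT.isConnected.exists_path_of_dist t y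
  have hmq : m ∉ q.support := by
    intro hm
    rcases mem_support_path hT hq hm with h' | h'
    · omega
    · subst h'; omega
  have hmr : m ∉ r.support := by
    intro hm
    rcases mem_support_path hT hr hm with h' | h'
    · omega
    · subst h'; omega
  have hpq : (q.concat hx.symm).IsPath := concat_isPath hT hq hx.symm hmq
  have hpr : (r.concat hy.symm).IsPath := concat_isPath hT hr hy.symm hmr
  have := (hT.existsUnique_path t m).unique hpq hpr
  obtain ⟨hv, -⟩ := Walk.concat_inj this
  exact hv

lemma tree_exists_parent (hT : T.IsTree) {u : U} (hu : u ≠ t) :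
    ∃ v, T.Adj u v ∧ T.dist t v < T.dist t u := by
  have hd : 0 < T.dist t u := hT.isConnected.pos_dist_of_ne (Ne.symm hu)
  obtain ⟨p, hp, hpl⟩ := hT.isConnected.exists_path_of_dist t u
  have hrl : p.reverse.length = p.length := Walk.length_reverse p
  have hnr : ¬ p.reverse.Nil := by rw [Walk.nil_iff_length_eq]; omega
  refine ⟨p.reverse.getVert 1, p.reverse.adj_snd hnr, ?_⟩
  have h1 : T.dist (p.reverse.getVert 1) t ≤ p.reverse.tail.length := T.dist_le _
  have h2 : p.reverse.tail.length + 1 = p.reverse.length := Walk.length_tail_add_one hnr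
  rw [T.dist_comm] at h1
  omega

end tree

section opu

variable {V U : Type*} (G : SimpleGraph V) (T : SimpleGraph U) (g : V) (t : U)

/-- depth of a vertex of the one-point union -/
noncomputable def dep : V ⊕ {u : U // u ≠ t} → ℕ := Sum.elim (fun _ => 0) fun u => T.dist t u.1

variable {G T g t}

@[simp] lemma dep_inl (a : V) : dep (V := V) T t (Sum.inl a) = 0 := rfl
@[simp] lemma dep_inr (u : {u : U // u ≠ t}) : dep (V := V) T t (Sum.inr u) = T.dist t u.1 := rfl

lemma adj_inl_inl {a b : V} :
    (onePointUnion G T g t).Adj (.inl a) (.inl b) ↔ G.Adj a b := by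
  rw [onePointUnion, SimpleGraph.fromRel_adj]
  constructor
  · rintro ⟨-, h | h⟩
    · exact h
    · exact h.symm
  · exact fun h => ⟨by simp [h.ne], Or.inl h⟩

lemma adj_inl_inr {a : V} {b : {u : U // u ≠ t}} :
    (onePointUnion G T g t).Adj (.inl a) (.inr b) ↔ a = g ∧ T.Adj t b.1 := by
  rw [onePointUnion, SimpleGraph.fromRel_adj]
  constructor
  · rintro ⟨-, h | h⟩ <;> exact h
  · exact fun h => ⟨by simp, Or.inl h⟩

lemma adj_inr_inl {a : {u : U // u ≠ t}} {b : V} :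
    (onePointUnion G T g t).Adj (.inr a) (.inl b) ↔ b = g ∧ T.Adj t a.1 := by
  rw [onePointUnion, SimpleGraph.fromRel_adj]
  constructor
  · rintro ⟨-, h | h⟩ <;> exact h
  · exact fun h => ⟨by simp, Or.inl h⟩

lemma adj_inr_inr {a b : {u : U // u ≠ t}} :
    (onePointUnion G T g t).Adj (.inr a) (.inr b) ↔ T.Adj a.1 b.1 := by
  rw [onePointUnion, SimpleGraph.fromRel_adj]
  constructor
  · rintro ⟨-, h | h⟩
    · exact h
    · exact h.symm
  · exact fun h => ⟨by simp [Subtype.ext_iff, h.ne], Or.inl h⟩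

variable (hT : T.IsTree)
include hT

lemma dep_lt_card [Fintype U] [DecidableEq U] (x : V ⊕ {u : U // u ≠ t}) :
    dep T t x < Fintype.card U := by
  cases x with
  | inl a =>
    have : Nonempty U := ⟨t⟩
    simpa using Fintype.card_pos
  | inr u =>
    obtain ⟨p, hp, hpl⟩ := hT.isConnected.exists_path_of_dist t u.1
    have := hp.length_lt
    simp only [dep_inr]
    omega

lemma adj_dep_eq [DecidableEq U] {x y : V ⊕ {u : U // u ≠ t}}
    (h : (onePointUnion G T g t).Adj x y) (hd : dep T t x = dep T t y) :
    ∃ a b, x = Sum.inl a ∧ y = Sum.inl b ∧ G.Adj a b := by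
  cases x with
  | inl a =>
    cases y with
    | inl b => exact ⟨a, b, rfl, rfl, adj_inl_inl.mp h⟩
    | inr u =>
      exfalso
      have := hT.isConnected.pos_dist_of_ne (Ne.symm u.2)
      simp only [dep_inl, dep_inr] at hd
      omega
  | inr u =>
    cases y with
    | inl b =>
      exfalso
      have := hT.isConnected.pos_dist_of_ne (Ne.symm u.2)
      simp only [dep_inl, dep_inr] at hd
      omega
    | inr w =>
      exact absurd hd (tree_adj_dist_ne hT (adj_inr_inr.mp h))

lemma opu_parent_unique [DecidableEq U] {m x y : V ⊕ {u : U // u ≠ t}}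
    (hx : (onePointUnion G T g t).Adj m x) (hy : (onePointUnion G T g t).Adj m y)
    (hdx : dep T t x < dep T t m) (hdy : dep T t y < dep T t m) : x = y := by
  cases m with
  | inl a => simp at hdx
  | inr m' =>
    cases x with
    | inl a =>
      obtain ⟨rfl, htm⟩ := adj_inr_inl.mp hx
      have hm1 : T.dist t m'.1 = 1 := SimpleGraph.dist_eq_one_iff_adj.mpr htm
      cases y with
      | inl b =>
        obtain ⟨rfl, -⟩ := adj_inr_inl.mp hy
        rfl
      | inr w =>
        exfalso
        simp only [dep_inr] at hdy
        have : T.dist t w.1 = 0 := by omega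
        exact w.2 ((hT.isConnected.dist_eq_zero_iff).mp this).symm
    | inr u =>
      cases y with
      | inl b =>
        exfalso
        obtain ⟨rfl, htm⟩ := adj_inr_inl.mp hy
        have hm1 : T.dist t m'.1 = 1 := SimpleGraph.dist_eq_one_iff_adj.mpr htm
        simp only [dep_inr] at hdx
        have : T.dist t u.1 = 0 := by omega
        exact u.2 ((hT.isConnected.dist_eq_zero_iff).mp this).symm
      | inr w =>
        have := tree_parent_unique hT (adj_inr_inr.mp hx) (adj_inr_inr.mp hy)
          (by simpa using hdx) (by simpa using hdy)
        exact congrArg Sum.inr (Subtype.ext this)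

lemma opu_exists_parent [DecidableEq U] {m : V ⊕ {u : U // u ≠ t}} (hm : 0 < dep T t m) :
    ∃ y, (onePointUnion G T g t).Adj m y ∧ dep T t y < dep T t m := by
  cases m with
  | inl a => simp at hm
  | inr u =>
    obtain ⟨v, huv, hv⟩ := tree_exists_parent hT u.2
    by_cases hvt : v = t
    · refine ⟨Sum.inl g, adj_inr_inl.mpr ⟨rfl, by subst hvt; exact huv.symm⟩, ?_⟩
      simpa using hm
    · exact ⟨Sum.inr ⟨v, hvt⟩, adj_inr_inr.mpr huv, by simpa using hv⟩

end opu
end OPUaux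

namespace Part3
open SimpleGraph OPUaux

variable {V U : Type*} [Fintype V] [DecidableEq V] [Fintype U] [DecidableEq U]
  (G : SimpleGraph V) [DecidableRel G.Adj] (T : SimpleGraph U) [DecidableRel T.Adj]
  (g : V) (t : U)

/-- grading on darts of the one-point union -/
noncomputable def bgrad (d : (onePointUnion G T g t).Dart) : ℕ :=
  if dep T t d.toProd.2 < dep T t d.toProd.1 then Fintype.card U - dep T t d.toProd.1
  else if dep T t d.toProd.1 < dep T t d.toProd.2 then Fintype.card U + dep T t d.toProd.2
  else Fintype.card U

variable {G T g t}

lemma bgrad_eq_card_iff (hT : T.IsTree) (d : (onePointUnion G T g t).Dart) :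
    bgrad G T g t d = Fintype.card U ↔ dep T t d.toProd.1 = dep T t d.toProd.2 := by
  have h1 := dep_lt_card hT d.toProd.1
  have h2 := dep_lt_card hT d.toProd.2
  unfold bgrad
  split_ifs <;> omega

lemma opu_key (hT : T.IsTree) {d e : (onePointUnion G T g t).Dart}
    (hme : d.toProd.2 = e.toProd.1) (hxy : d.toProd.1 ≠ e.toProd.2) :
    bgrad G T g t d < bgrad G T g t e ∨
      (bgrad G T g t d = Fintype.card U ∧ bgrad G T g t e = Fintype.card U) := by
  have hadj1 : (onePointUnion G T g t).Adj d.toProd.1 d.toProd.2 := d.adj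
  have hadj2 : (onePointUnion G T g t).Adj d.toProd.2 e.toProd.2 := hme ▸ e.adj
  have hd1 := dep_lt_card hT d.toProd.1
  have hd2 := dep_lt_card hT d.toProd.2
  have hd3 := dep_lt_card hT e.toProd.2
  have huniq : dep T t d.toProd.1 < dep T t d.toProd.2 →
      dep T t e.toProd.2 < dep T t d.toProd.2 → d.toProd.1 = e.toProd.2 :=
    fun h1 h2 => opu_parent_unique hT hadj1.symm hadj2 h1 h2
  have H2 : dep T t d.toProd.2 = dep T t e.toProd.2 → dep T t d.toProd.2 = 0 := by
    intro h
    obtain ⟨a', b', hm, -, -⟩ := adj_dep_eq hT hadj2 h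
    rw [hm]; rfl
  have H3 : dep T t d.toProd.1 = dep T t d.toProd.2 → dep T t d.toProd.2 = 0 := by
    intro h
    obtain ⟨a', b', -, hm, -⟩ := adj_dep_eq hT hadj1 h
    rw [hm]; rfl
  rcases Nat.lt_trichotomy (dep T t d.toProd.1) (dep T t d.toProd.2) with h1 | h1 | h1 <;>
    rcases Nat.lt_trichotomy (dep T t e.toProd.2) (dep T t d.toProd.2) with h2 | h2 | h2 <;>
      [exact absurd (huniq h1 h2) hxy; skip; skip; skip; skip; skip; skip; skip; skip] <;>
    · try have hz1 : dep T t d.toProd.2 = 0 := H2 h2.symm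
      try have hz2 : dep T t d.toProd.2 = 0 := H3 h1
      simp only [bgrad]
      rw [← hme]
      split_ifs <;> omega

lemma opu_blockTriangular [inst : DecidableRel (onePointUnion G T g t).Adj] (hT : T.IsTree) :
    (nbMatrix (onePointUnion G T g t)).BlockTriangular (bgrad G T g t) := by
  intro i j hlt
  by_contra hne
  have hcond : i.toProd.2 = j.toProd.1 ∧ i.toProd.1 ≠ j.toProd.2 := by
    by_contra hc
    exact hne (by simp [nbMatrix, hc])
  rcases opu_key hT hcond.1 hcond.2 with h | ⟨h1, h2⟩ <;> omega

lemma opu_block_zero [inst : DecidableRel (onePointUnion G T g t).Adj] (hT : T.IsTree)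
    {a : ℕ} (ha : a ≠ Fintype.card U) :
    (nbMatrix (onePointUnion G T g t)).toSquareBlock (bgrad G T g t) a = 0 := by
  ext i j
  rw [Matrix.zero_apply]
  by_contra hne
  have hcond : (i : (onePointUnion G T g t).Dart).toProd.2 = (j : (onePointUnion G T g t).Dart).toProd.1
      ∧ (i : (onePointUnion G T g t).Dart).toProd.1 ≠ (j : (onePointUnion G T g t).Dart).toProd.2 := by
    by_contra hc
    exact hne (by simp [Matrix.toSquareBlock_def, nbMatrix, hc])
  have hi := i.2
  have hj := j.2
  rcases opu_key hT hcond.1 hcond.2 with h | ⟨h1, h2⟩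
  · simp only [hi, hj] at h; omega
  · exact ha (hi ▸ h1)

lemma charpoly_zero_matrix (I : Type*) [Fintype I] [DecidableEq I] :
    (0 : Matrix I I ℂ).charpoly = Polynomial.X ^ Fintype.card I := by
  have h : Matrix.charmatrix (0 : Matrix I I ℂ) = Matrix.diagonal fun _ => (Polynomial.X : ℂ[X]) := by
    ext i j
    by_cases hij : i = j <;> simp [Matrix.charmatrix_apply, hij, Matrix.diagonal]
  rw [Matrix.charpoly, h, Matrix.det_diagonal]
  simp [Finset.prod_const, Finset.card_univ]

lemma card_ne_t : Fintype.card {u : U // u ≠ t} = Fintype.card U - 1 := by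
  have h := Fintype.card_subtype_compl (fun u : U => u = t)
  simpa [Fintype.card_subtype_eq] using h

lemma card_toward [inst : DecidableRel (onePointUnion G T g t).Adj] (hT : T.IsTree) :
    Fintype.card {d : (onePointUnion G T g t).Dart //
        dep T t d.toProd.2 < dep T t d.toProd.1} = Fintype.card U - 1 := by
  have hpar : ∀ u : {u : U // u ≠ t}, ∃ y, (onePointUnion G T g t).Adj (Sum.inr u) y ∧
      dep (V := V) T t y < dep (V := V) T t (Sum.inr u) := by
    intro u
    refine opu_exists_parent hT ?_
    simpa using hT.isConnected.pos_dist_of_ne (Ne.symm u.2)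
  choose pf hadj hlt using hpar
  let f : {u : U // u ≠ t} → {d : (onePointUnion G T g t).Dart //
      dep T t d.toProd.2 < dep T t d.toProd.1} :=
    fun u => ⟨⟨(Sum.inr u, pf u), hadj u⟩, hlt u⟩
  have hinj : Function.Injective f := by
    intro u1 u2 h
    have := congrArg (fun d => d.1.toProd.1) h
    simpa [f] using this
  have hsurj : Function.Surjective f := by
    rintro ⟨d, hd⟩
    have h0 : 0 < dep T t d.toProd.1 := lt_of_le_of_lt (Nat.zero_le _) hd
    obtain ⟨u, hu⟩ : ∃ u, d.toProd.1 = Sum.inr u := by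
      cases hx : d.toProd.1 with
      | inl a => rw [hx] at h0; simp at h0
      | inr u => exact ⟨u, rfl⟩
    refine ⟨u, ?_⟩
    have hadj' : (onePointUnion G T g t).Adj (Sum.inr u) d.toProd.2 := hu ▸ d.adj
    have heq : d.toProd.2 = pf u :=
      opu_parent_unique hT hadj' (hadj u) (hu ▸ hd) (hlt u)
    apply Subtype.ext
    apply SimpleGraph.Dart.ext
    show (Sum.inr u, pf u) = d.toProd
    rw [Prod.ext_iff]
    exact ⟨hu.symm, heq.symm⟩
  rw [Fintype.card_congr (Equiv.ofBijective f ⟨hinj, hsurj⟩).symm]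
  exact card_ne_t

lemma card_away [inst : DecidableRel (onePointUnion G T g t).Adj] :
    Fintype.card {d : (onePointUnion G T g t).Dart //
        dep T t d.toProd.1 < dep T t d.toProd.2} =
    Fintype.card {d : (onePointUnion G T g t).Dart //
        dep T t d.toProd.2 < dep T t d.toProd.1} := by
  refine Fintype.card_congr ⟨fun d => ⟨d.1.symm, ?_⟩, fun d => ⟨d.1.symm, ?_⟩, ?_, ?_⟩
  · simpa [SimpleGraph.Dart.symm] using d.2
  · simpa [SimpleGraph.Dart.symm] using d.2
  · intro d; apply Subtype.ext; exact SimpleGraph.Dart.symm_symm _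
  · intro d; apply Subtype.ext; exact SimpleGraph.Dart.symm_symm _

lemma blockK [inst : DecidableRel (onePointUnion G T g t).Adj] (hT : T.IsTree) :
    ∃ e : G.Dart ≃ {d : (onePointUnion G T g t).Dart // bgrad G T g t d = Fintype.card U},
      ∀ d0 : G.Dart, ((e d0 : {d : (onePointUnion G T g t).Dart // bgrad G T g t d = Fintype.card U}) :
        (onePointUnion G T g t).Dart).toProd = (Sum.inl d0.toProd.1, Sum.inl d0.toProd.2) := by
  let f : G.Dart → {d : (onePointUnion G T g t).Dart // bgrad G T g t d = Fintype.card U} :=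
    fun d0 => ⟨⟨(Sum.inl d0.toProd.1, Sum.inl d0.toProd.2), adj_inl_inl.mpr d0.adj⟩,
      (bgrad_eq_card_iff hT _).mpr rfl⟩
  have hinj : Function.Injective f := by
    intro d1 d2 h
    have h' := congrArg (fun d => d.1.toProd) h
    simp only [f, Prod.ext_iff, Sum.inl.injEq] at h'
    exact SimpleGraph.Dart.ext _ _ (Prod.ext h'.1 h'.2)
  have hsurj : Function.Surjective f := by
    rintro ⟨d, hd⟩
    rw [bgrad_eq_card_iff hT] at hd
    obtain ⟨a, b', h1, h2, hG⟩ := adj_dep_eq hT d.adj hd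
    refine ⟨⟨(a, b'), hG⟩, ?_⟩
    apply Subtype.ext
    apply SimpleGraph.Dart.ext
    show (Sum.inl a, Sum.inl b') = d.toProd
    rw [Prod.ext_iff]
    exact ⟨h1.symm, h2.symm⟩
  exact ⟨Equiv.ofBijective f ⟨hinj, hsurj⟩, fun d0 => rfl⟩

end Part3


open OPUaux Part3

/-- If `Ĝ` is obtained from `G` by identifying one vertex of `G` with one vertex of a tree `T`
on `n` vertices, then the characteristic polynomial of the non-backtracking matrix of `Ĝ`
is `λ^(2(n-1))` times that of the non-backtracking matrix of `G`. -/
theorem charpoly_nbMatrix_onePointUnion_tree {V U : Type*} [Fintype V] [DecidableEq V]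
    [Fintype U] [DecidableEq U] (G : SimpleGraph V) [DecidableRel G.Adj]
    (T : SimpleGraph U) [DecidableRel T.Adj] (hT : T.IsTree) (g : V) (t : U) :
    letI : DecidableRel (onePointUnion G T g t).Adj := Classical.decRel _
    (nbMatrix (onePointUnion G T g t)).charpoly
      = X ^ (2 * (Fintype.card U - 1)) * (nbMatrix G).charpoly := by
  letI instD : DecidableRel (onePointUnion G T g t).Adj := Classical.decRel _
  show (nbMatrix (onePointUnion G T g t)).charpoly
      = X ^ (2 * (Fintype.card U - 1)) * (nbMatrix G).charpoly
  have hbt := opu_blockTriangular (G := G) (T := T) (g := g) (t := t) (inst := instD) hT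
  rw [hbt.charpoly]
  have hzero : ∀ a ∈ (Finset.image (bgrad G T g t) Finset.univ).erase (Fintype.card U),
      ((nbMatrix (onePointUnion G T g t)).toSquareBlock (bgrad G T g t) a).charpoly
        = X ^ (Finset.univ.filter fun d => bgrad G T g t d = a).card := by
    intro a ha
    rw [opu_block_zero hT (Finset.ne_of_mem_erase ha), charpoly_zero_matrix]
    congr 1
    exact Fintype.card_subtype _
  have hsum : ∑ a ∈ (Finset.image (bgrad G T g t) Finset.univ).erase (Fintype.card U),
      (Finset.univ.filter fun d => bgrad G T g t d = a).card = 2 * (Fintype.card U - 1) := by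
    have h1 : (Finset.univ.filter fun d => bgrad G T g t d ≠ Fintype.card U).card
        = ∑ a ∈ (Finset.image (bgrad G T g t) Finset.univ).erase (Fintype.card U),
          ((Finset.univ.filter fun d => bgrad G T g t d ≠ Fintype.card U).filter
            (fun d => bgrad G T g t d = a)).card := by
      refine Finset.card_eq_sum_card_fiberwise ?_
      intro x hx
      rw [Finset.mem_coe, Finset.mem_filter] at hx
      exact Finset.mem_coe.mpr (Finset.mem_erase.mpr ⟨hx.2, Finset.mem_image_of_mem _ (Finset.mem_univ _)⟩)
    have h2 : ∀ a ∈ (Finset.image (bgrad G T g t) Finset.univ).erase (Fintype.card U),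
        ((Finset.univ.filter fun d => bgrad G T g t d ≠ Fintype.card U).filter
          (fun d => bgrad G T g t d = a)).card
        = (Finset.univ.filter fun d => bgrad G T g t d = a).card := by
      intro a ha
      congr 1
      ext d
      simp only [Finset.mem_filter, Finset.mem_univ, true_and]
      constructor
      · exact fun h => h.2
      · exact fun h => ⟨h ▸ Finset.ne_of_mem_erase ha, h⟩
    rw [Finset.sum_congr rfl h2] at h1
    rw [← h1]
    have h3 : (Finset.univ.filter fun d => bgrad G T g t d ≠ Fintype.card U)
        = (Finset.univ.filter fun d : (onePointUnion G T g t).Dart =>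
            dep T t d.toProd.2 < dep T t d.toProd.1)
          ∪ (Finset.univ.filter fun d : (onePointUnion G T g t).Dart =>
            dep T t d.toProd.1 < dep T t d.toProd.2) := by
      ext d
      have hiff := bgrad_eq_card_iff hT d
      simp only [Finset.mem_filter, Finset.mem_union, Finset.mem_univ, true_and]
      omega
    have h4 : Disjoint
        (Finset.univ.filter fun d : (onePointUnion G T g t).Dart =>
          dep T t d.toProd.2 < dep T t d.toProd.1)
        (Finset.univ.filter fun d : (onePointUnion G T g t).Dart =>
          dep T t d.toProd.1 < dep T t d.toProd.2) := by
      rw [Finset.disjoint_left]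
      intro d hd1 hd2
      rw [Finset.mem_filter] at hd1 hd2
      omega
    rw [h3, Finset.card_union_of_disjoint h4]
    have h5 : (Finset.univ.filter fun d : (onePointUnion G T g t).Dart =>
        dep T t d.toProd.2 < dep T t d.toProd.1).card = Fintype.card U - 1 := by
      rw [← Fintype.card_subtype]
      exact card_toward hT
    have h6 : (Finset.univ.filter fun d : (onePointUnion G T g t).Dart =>
        dep T t d.toProd.1 < dep T t d.toProd.2).card
        = (Finset.univ.filter fun d : (onePointUnion G T g t).Dart =>
        dep T t d.toProd.2 < dep T t d.toProd.1).card := by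
      rw [← Fintype.card_subtype, ← Fintype.card_subtype]
      exact card_away
    omega
  by_cases hKs : Fintype.card U ∈ Finset.image (bgrad G T g t) Finset.univ
  · rw [← Finset.mul_prod_erase _ _ hKs]
    have hfK : ((nbMatrix (onePointUnion G T g t)).toSquareBlock (bgrad G T g t)
        (Fintype.card U)).charpoly = (nbMatrix G).charpoly := by
      obtain ⟨e, he⟩ := blockK (G := G) (T := T) (g := g) (t := t) hT
      have hmat : (nbMatrix (onePointUnion G T g t)).toSquareBlock (bgrad G T g t)
          (Fintype.card U) = (Matrix.reindex e e) (nbMatrix G) := by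
        ext i j
        obtain ⟨i0, rfl⟩ := e.surjective i
        obtain ⟨j0, rfl⟩ := e.surjective j
        rw [Matrix.reindex_apply, Matrix.submatrix_apply, Equiv.symm_apply_apply,
          Equiv.symm_apply_apply]
        show nbMatrix (onePointUnion G T g t) (e i0).1 (e j0).1 = nbMatrix G i0 j0
        simp [nbMatrix, he i0, he j0]
      rw [hmat, Matrix.charpoly_reindex]
    rw [hfK, Finset.prod_congr rfl hzero, Finset.prod_pow_eq_pow_sum, hsum, mul_comm]
  · have hempty : IsEmpty G.Dart := by
      refine ⟨fun d0 => hKs (Finset.mem_image.mpr ⟨⟨(Sum.inl d0.toProd.1, Sum.inl d0.toProd.2),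
        adj_inl_inl.mpr d0.adj⟩, Finset.mem_univ _, ?_⟩)⟩
      exact (bgrad_eq_card_iff hT _).mpr rfl
    have hG1 : (nbMatrix G).charpoly = 1 := by
      rw [Matrix.charpoly]
      exact Matrix.det_isEmpty
    rw [hG1, mul_one, ← Finset.erase_eq_of_notMem hKs,
      Finset.prod_congr rfl hzero, Finset.prod_pow_eq_pow_sum, hsum]
end

section
/- Let G be a graph formed by identifying one vertex of a graph Ĝ with one vertex of a cycle C_n, and let B be the non-backtracking matrix of G. Then for every j = 0, …, n−1, e^{2πij/n} is an eigenvalue of B. -/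
open Matrix Polynomial

namespace NBAux

/-- zpow of an `n`-th root of unity only depends on the exponent mod `n`. -/
lemma zpow_modEq {ζ : ℂ} {n : ℕ} (hn : n ≠ 0) (hζ : ζ ^ n = 1) {p q : ℤ}
    (h : p ≡ q [ZMOD (n : ℤ)]) : ζ ^ p = ζ ^ q := by
  have hζ0 : ζ ≠ 0 := by
    intro h0
    rw [h0, zero_pow hn] at hζ
    exact zero_ne_one hζ
  obtain ⟨m, hm⟩ := h.dvd
  have hq : q = p + (n : ℤ) * m := by linarith
  rw [hq, zpow_add₀ hζ0, _root_.zpow_mul, zpow_natCast, hζ, _root_.one_zpow, mul_one]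

variable {V : Type*} {n : ℕ}

/-- The embedding of the cycle's vertices into the one-point union's vertex type. -/
def glue (g : V) (t : Fin n) : Fin n → V ⊕ {u : Fin n // u ≠ t} :=
  fun k => if h : k = t then Sum.inl g else Sum.inr ⟨k, h⟩

lemma glue_inj (g : V) (t : Fin n) : Function.Injective (glue g t) := by
  intro a b hab
  unfold glue at hab
  by_cases ha : a = t <;> by_cases hb : b = t
  · exact ha.trans hb.symm
  · rw [dif_pos ha, dif_neg hb] at hab; exact absurd hab (by simp)
  · rw [dif_neg ha, dif_pos hb] at hab; exact absurd hab (by simp)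
  · rw [dif_neg ha, dif_neg hb] at hab
    exact congrArg Subtype.val (Sum.inr_injective hab)

section Fin
variable [NeZero n] (hn : 3 ≤ n)
include hn

lemma val_one : ((1 : Fin n) : ℕ) = 1 := by
  rw [Fin.val_one']
  exact Nat.mod_eq_of_lt (by omega)

lemma one_ne_zero' : (1 : Fin n) ≠ 0 := by
  intro h
  have := congrArg Fin.val h
  rw [val_one hn] at this
  simp at this

lemma two_ne_zero' : (1 + 1 : Fin n) ≠ 0 := by
  intro h
  have := congrArg Fin.val h
  rw [Fin.val_add, val_one hn, Nat.mod_eq_of_lt (show 1 + 1 < n by omega)] at this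
  simp at this

lemma add_one_ne (k : Fin n) : k + 1 ≠ k := by
  intro h
  refine one_ne_zero' hn (add_left_cancel (a := k) ?_)
  rw [add_zero]; exact h

lemma sub_one_ne (k : Fin n) : k - 1 ≠ k := by
  intro h
  exact one_ne_zero' hn (sub_eq_self.mp h)

lemma add_one_ne_sub_one (k : Fin n) : k + 1 ≠ k - 1 := by
  intro h
  rw [sub_eq_add_neg] at h
  have h1 : (1 : Fin n) = -1 := add_left_cancel (a := k) h
  exact two_ne_zero' hn (by rw [eq_neg_iff_add_eq_zero] at h1; exact h1)

lemma val_add_one_modEq (k : Fin n) :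
    (((k + 1 : Fin n) : ℕ) : ℤ) ≡ ((k : ℕ) : ℤ) + 1 [ZMOD (n : ℤ)] := by
  have h : ((k + 1 : Fin n) : ℕ) = ((k : ℕ) + 1) % n := by
    rw [Fin.val_add, val_one hn]
  rw [h, Int.natCast_mod]
  push_cast
  exact Int.emod_emod_of_dvd _ dvd_rfl

lemma val_sub_one_modEq (k : Fin n) :
    (((k - 1 : Fin n) : ℕ) : ℤ) ≡ ((k : ℕ) : ℤ) - 1 [ZMOD (n : ℤ)] := by
  have h : ((k - 1 : Fin n) : ℕ) = (n - 1 + (k : ℕ)) % n := by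
    rw [Fin.sub_def]
    simp only [val_one hn]
  have h2 : (((n - 1 + (k : ℕ)) % n : ℕ) : ℤ) ≡ ((n : ℤ) - 1 + ((k : ℕ) : ℤ)) [ZMOD (n : ℤ)] := by
    rw [Int.natCast_mod]
    push_cast [Nat.cast_sub (show 1 ≤ n by omega)]
    exact Int.emod_emod_of_dvd _ dvd_rfl
  rw [h]
  refine h2.trans (Int.ModEq.symm (Int.modEq_iff_dvd.mpr ⟨1, by push_cast; ring⟩))

end Fin

section Graph

variable {V : Type*} {n : ℕ} (Ghat : SimpleGraph V) (g : V) (t : Fin n) [NeZero n]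

lemma cyc_adj (hn : 3 ≤ n) (u v : Fin n) :
    (SimpleGraph.cycleGraph n).Adj u v ↔ u = v + 1 ∨ v = u + 1 := by
  have key : ∀ a b : Fin n, ((a - b : Fin n) : ℕ) = 1 ↔ a = b + 1 := by
    intro a b
    rw [← val_one hn, Fin.val_eq_val, sub_eq_iff_eq_add, add_comm]
  rw [SimpleGraph.cycleGraph_adj', key, key]

lemma glue_adj (hn : 3 ≤ n) (k : Fin n) :
    (onePointUnion Ghat (SimpleGraph.cycleGraph n) g t).Adj (glue g t k) (glue g t (k + 1)) := by
  rw [onePointUnion, SimpleGraph.fromRel_adj]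
  constructor
  · intro h
    exact add_one_ne hn k (glue_inj g t h.symm)
  · left
    unfold glue
    by_cases hk : k = t
    · subst hk
      rw [dif_pos rfl, dif_neg (add_one_ne hn k)]
      exact ⟨rfl, (cyc_adj hn k (k + 1)).mpr (Or.inr rfl)⟩
    · by_cases hk1 : k + 1 = t
      · rw [dif_neg hk, dif_pos hk1]
        exact ⟨rfl, (cyc_adj hn t k).mpr (Or.inl hk1.symm)⟩
      · rw [dif_neg hk, dif_neg hk1]
        exact (cyc_adj hn k (k + 1)).mpr (Or.inr rfl)

lemma adj_glue_cases (hn : 3 ≤ n) (x : V ⊕ {u : Fin n // u ≠ t}) (m : Fin n)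
    (h : (onePointUnion Ghat (SimpleGraph.cycleGraph n) g t).Adj x (glue g t m)) :
    x = glue g t (m + 1) ∨ x = glue g t (m - 1) ∨ (m = t ∧ ∃ a : V, x = Sum.inl a) := by
  rw [onePointUnion, SimpleGraph.fromRel_adj] at h
  obtain ⟨-, hrel⟩ := h
  by_cases hm : m = t
  · subst hm
    rcases x with a | u
    · exact Or.inr (Or.inr ⟨rfl, a, rfl⟩)
    · rw [show glue g m m = Sum.inl g from dif_pos rfl] at hrel
      have hadj : (SimpleGraph.cycleGraph n).Adj m u.1 := by
        rcases hrel with ⟨-, h⟩ | ⟨-, h⟩ <;> exact h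
      rcases (cyc_adj hn m u.1).mp hadj with h1 | h1
      · -- m = u + 1, so u = m - 1
        right; left
        have hu : u.1 = m - 1 := eq_sub_iff_add_eq.mpr h1.symm
        rw [show glue g m (m - 1) = Sum.inr ⟨m - 1, sub_one_ne hn m⟩ from dif_neg (sub_one_ne hn m)]
        congr 1
        exact Subtype.ext hu
      · -- u = m + 1
        left
        rw [show glue g m (m + 1) = Sum.inr ⟨m + 1, add_one_ne hn m⟩ from dif_neg (add_one_ne hn m)]
        congr 1
        exact Subtype.ext h1
  · rw [show glue g t m = Sum.inr ⟨m, hm⟩ from dif_neg hm] at hrel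
    rcases x with a | u
    · have hadj : a = g ∧ (SimpleGraph.cycleGraph n).Adj t m := by
        rcases hrel with ⟨h1, h2⟩ | ⟨h1, h2⟩ <;> exact ⟨h1, h2⟩
      obtain ⟨rfl, hadj⟩ := hadj
      rcases (cyc_adj hn t m).mp hadj with h1 | h1
      · left
        rw [show glue a t (m + 1) = Sum.inl a from by rw [← h1]; exact dif_pos rfl]
      · right; left
        have h2 : t = m - 1 := by rw [h1, add_sub_cancel_right]
        rw [show glue a t (m - 1) = Sum.inl a from by rw [← h2]; exact dif_pos rfl]
    · have hadj : (SimpleGraph.cycleGraph n).Adj u.1 m := by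
        rcases hrel with h | h <;> [exact h; exact h.symm]
      rcases (cyc_adj hn u.1 m).mp hadj with h1 | h1
      · left
        rw [show glue g t (m + 1) = Sum.inr ⟨m + 1, by rw [← h1]; exact u.2⟩ from
          dif_neg (by rw [← h1]; exact u.2)]
        congr 1
        exact Subtype.ext h1
      · right; left
        have hu : u.1 = m - 1 := by rw [h1]; rw [add_sub_cancel_right]
        rw [show glue g t (m - 1) = Sum.inr ⟨m - 1, by rw [← hu]; exact u.2⟩ from
          dif_neg (by rw [← hu]; exact u.2)]
        congr 1
        exact Subtype.ext hu

end Graph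

section Darts

variable {V : Type*} [DecidableEq V] {n : ℕ} (Ghat : SimpleGraph V) (g : V) (t : Fin n)
  [NeZero n]

/-- The forward dart of the cycle from `glue k` to `glue (k+1)`. -/
def dF (hn : 3 ≤ n) (k : Fin n) : (onePointUnion Ghat (SimpleGraph.cycleGraph n) g t).Dart :=
  ⟨(glue g t k, glue g t (k + 1)), glue_adj Ghat g t hn k⟩

/-- The backward dart of the cycle from `glue (k+1)` to `glue k`. -/
def dB (hn : 3 ≤ n) (k : Fin n) : (onePointUnion Ghat (SimpleGraph.cycleGraph n) g t).Dart :=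
  ⟨(glue g t (k + 1), glue g t k), (glue_adj Ghat g t hn k).symm⟩

variable (hn : 3 ≤ n)

@[simp] lemma dF_fst (k : Fin n) : (dF Ghat g t hn k).toProd.1 = glue g t k := rfl
@[simp] lemma dF_snd (k : Fin n) : (dF Ghat g t hn k).toProd.2 = glue g t (k + 1) := rfl
@[simp] lemma dB_fst (k : Fin n) : (dB Ghat g t hn k).toProd.1 = glue g t (k + 1) := rfl
@[simp] lemma dB_snd (k : Fin n) : (dB Ghat g t hn k).toProd.2 = glue g t k := rfl

lemma dF_eq_dF_iff (k m : Fin n) : dF Ghat g t hn k = dF Ghat g t hn m ↔ k = m := by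
  constructor
  · intro h
    have := congrArg (fun d => (SimpleGraph.Dart.toProd d).1) h
    exact glue_inj g t this
  · rintro rfl; rfl

lemma dB_eq_dB_iff (k m : Fin n) : dB Ghat g t hn k = dB Ghat g t hn m ↔ k = m := by
  constructor
  · intro h
    have := congrArg (fun d => (SimpleGraph.Dart.toProd d).2) h
    exact glue_inj g t this
  · rintro rfl; rfl

lemma dF_ne_dB (k m : Fin n) : dF Ghat g t hn k ≠ dB Ghat g t hn m := by
  intro h
  have h1 : k = m + 1 := glue_inj g t (congrArg (fun d => (SimpleGraph.Dart.toProd d).1) h)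
  have h2 : k + 1 = m := glue_inj g t (congrArg (fun d => (SimpleGraph.Dart.toProd d).2) h)
  rw [h1] at h2
  have : m + (1 + 1) = m + 0 := by rw [add_zero, ← add_assoc]; exact h2
  exact two_ne_zero' hn (add_left_cancel this)

/-- The candidate eigenvector, supported on the darts of the cycle. -/
noncomputable def vv (ζ : ℂ) :
    (onePointUnion Ghat (SimpleGraph.cycleGraph n) g t).Dart → ℂ := fun d =>
  ∑ k : Fin n,
    ((if d = dF Ghat g t hn k then ζ ^ ((k : ℕ) : ℤ) else 0) +
      (if d = dB Ghat g t hn k then -ζ ^ (2 * ((t : ℕ) : ℤ) - 1 - ((k : ℕ) : ℤ)) else 0))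

lemma vv_dF (ζ : ℂ) (m : Fin n) : vv Ghat g t hn ζ (dF Ghat g t hn m) = ζ ^ ((m : ℕ) : ℤ) := by
  unfold vv
  rw [Finset.sum_add_distrib]
  have h1 : (∑ k : Fin n, if dF Ghat g t hn m = dF Ghat g t hn k then ζ ^ ((k : ℕ) : ℤ) else 0)
      = ζ ^ ((m : ℕ) : ℤ) := by
    rw [Finset.sum_congr rfl (fun k _ =>
      (show (if dF Ghat g t hn m = dF Ghat g t hn k then ζ ^ ((k : ℕ) : ℤ) else 0)
          = (if k = m then ζ ^ ((k : ℕ) : ℤ) else 0) from by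
        by_cases h : k = m
        · subst h; simp
        · rw [if_neg (fun he => h ((dF_eq_dF_iff Ghat g t hn m k).mp he).symm), if_neg h]))]
    rw [Finset.sum_ite_eq' Finset.univ m (fun k => ζ ^ ((k : ℕ) : ℤ))]
    simp
  have h2 : (∑ k : Fin n, if dF Ghat g t hn m = dB Ghat g t hn k then
      -ζ ^ (2 * ((t : ℕ) : ℤ) - 1 - ((k : ℕ) : ℤ)) else 0) = 0 :=
    Finset.sum_eq_zero fun k _ => if_neg (dF_ne_dB Ghat g t hn m k)
  rw [h1, h2, add_zero]

lemma vv_dB (ζ : ℂ) (m : Fin n) :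
    vv Ghat g t hn ζ (dB Ghat g t hn m) = -ζ ^ (2 * ((t : ℕ) : ℤ) - 1 - ((m : ℕ) : ℤ)) := by
  unfold vv
  rw [Finset.sum_add_distrib]
  have h1 : (∑ k : Fin n, if dB Ghat g t hn m = dF Ghat g t hn k then ζ ^ ((k : ℕ) : ℤ) else 0)
      = 0 :=
    Finset.sum_eq_zero fun k _ => if_neg (fun h => dF_ne_dB Ghat g t hn k m h.symm)
  have h2 : (∑ k : Fin n, if dB Ghat g t hn m = dB Ghat g t hn k then
      -ζ ^ (2 * ((t : ℕ) : ℤ) - 1 - ((k : ℕ) : ℤ)) else 0)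
      = -ζ ^ (2 * ((t : ℕ) : ℤ) - 1 - ((m : ℕ) : ℤ)) := by
    rw [Finset.sum_congr rfl (fun k _ =>
      (show (if dB Ghat g t hn m = dB Ghat g t hn k then
            -ζ ^ (2 * ((t : ℕ) : ℤ) - 1 - ((k : ℕ) : ℤ)) else 0)
          = (if k = m then -ζ ^ (2 * ((t : ℕ) : ℤ) - 1 - ((k : ℕ) : ℤ)) else 0) from by
        by_cases h : k = m
        · subst h; simp
        · rw [if_neg (fun he => h ((dB_eq_dB_iff Ghat g t hn m k).mp he).symm), if_neg h]))]
    rw [Finset.sum_ite_eq' Finset.univ m (fun k => -ζ ^ (2 * ((t : ℕ) : ℤ) - 1 - ((k : ℕ) : ℤ)))]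
    simp
  rw [h1, h2, zero_add]

lemma vv_eq_zero (ζ : ℂ) (d : (onePointUnion Ghat (SimpleGraph.cycleGraph n) g t).Dart)
    (h : ∀ k : Fin n, d ≠ dF Ghat g t hn k ∧ d ≠ dB Ghat g t hn k) : vv Ghat g t hn ζ d = 0 :=
  Finset.sum_eq_zero fun k _ => by rw [if_neg (h k).1, if_neg (h k).2, add_zero]

end Darts

section Main

variable {V : Type*} [Fintype V] [DecidableEq V] (Ghat : SimpleGraph V) {n : ℕ} (g : V)
  (t : Fin n) [NeZero n]
  [inst : DecidableRel (onePointUnion Ghat (SimpleGraph.cycleGraph n) g t).Adj]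

lemma sum_mul_ite {α : Type*} [Fintype α] [DecidableEq α] (f : α → ℂ) (b : α) (c : ℂ) :
    ∑ e : α, f e * (if e = b then c else 0) = f b * c := by
  rw [Finset.sum_congr rfl (fun e _ => by rw [mul_ite, mul_zero])]
  rw [Finset.sum_ite_eq' Finset.univ b (fun e => f e * c)]
  simp

lemma mulVec_vv (hn : 3 ≤ n) (ζ : ℂ) (hζ : ζ ^ n = 1) :
    (nbMatrix (onePointUnion Ghat (SimpleGraph.cycleGraph n) g t)).mulVec (vv Ghat g t hn ζ)
      = ζ • vv Ghat g t hn ζ := by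
  have hn0 : n ≠ 0 := by omega
  have hζ0 : ζ ≠ 0 := by
    intro h0
    rw [h0, zero_pow hn0] at hζ
    exact zero_ne_one hζ
  funext d
  obtain ⟨⟨x, y⟩, hxy⟩ := d
  have step1 : (nbMatrix (onePointUnion Ghat (SimpleGraph.cycleGraph n) g t)).mulVec
      (vv Ghat g t hn ζ) ⟨(x, y), hxy⟩
      = ∑ k : Fin n,
        ((if y = glue g t k ∧ x ≠ glue g t (k + 1) then ζ ^ ((k : ℕ) : ℤ) else 0)
          + (if y = glue g t (k + 1) ∧ x ≠ glue g t k then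
              -ζ ^ (2 * ((t : ℕ) : ℤ) - 1 - ((k : ℕ) : ℤ)) else 0)) := by
    calc ((nbMatrix (onePointUnion Ghat (SimpleGraph.cycleGraph n) g t)).mulVec
          (vv Ghat g t hn ζ) ⟨(x, y), hxy⟩)
        = ∑ e, nbMatrix (onePointUnion Ghat (SimpleGraph.cycleGraph n) g t) ⟨(x, y), hxy⟩ e
            * vv Ghat g t hn ζ e := by
          simp only [Matrix.mulVec, dotProduct]
      _ = ∑ e, ∑ k : Fin n,
          (nbMatrix (onePointUnion Ghat (SimpleGraph.cycleGraph n) g t) ⟨(x, y), hxy⟩ e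
              * (if e = dF Ghat g t hn k then ζ ^ ((k : ℕ) : ℤ) else 0)
            + nbMatrix (onePointUnion Ghat (SimpleGraph.cycleGraph n) g t) ⟨(x, y), hxy⟩ e
              * (if e = dB Ghat g t hn k then
                  -ζ ^ (2 * ((t : ℕ) : ℤ) - 1 - ((k : ℕ) : ℤ)) else 0)) := by
          refine Finset.sum_congr rfl fun e _ => ?_
          rw [vv, Finset.mul_sum]
          exact Finset.sum_congr rfl fun k _ => mul_add _ _ _
      _ = ∑ k : Fin n, ∑ e,
          (nbMatrix (onePointUnion Ghat (SimpleGraph.cycleGraph n) g t) ⟨(x, y), hxy⟩ e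
              * (if e = dF Ghat g t hn k then ζ ^ ((k : ℕ) : ℤ) else 0)
            + nbMatrix (onePointUnion Ghat (SimpleGraph.cycleGraph n) g t) ⟨(x, y), hxy⟩ e
              * (if e = dB Ghat g t hn k then
                  -ζ ^ (2 * ((t : ℕ) : ℤ) - 1 - ((k : ℕ) : ℤ)) else 0)) := Finset.sum_comm
      _ = ∑ k : Fin n,
          (nbMatrix (onePointUnion Ghat (SimpleGraph.cycleGraph n) g t) ⟨(x, y), hxy⟩
              (dF Ghat g t hn k) * ζ ^ ((k : ℕ) : ℤ)
            + nbMatrix (onePointUnion Ghat (SimpleGraph.cycleGraph n) g t) ⟨(x, y), hxy⟩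
              (dB Ghat g t hn k)
              * (-ζ ^ (2 * ((t : ℕ) : ℤ) - 1 - ((k : ℕ) : ℤ)))) := by
          refine Finset.sum_congr rfl fun k _ => ?_
          rw [Finset.sum_add_distrib, sum_mul_ite, sum_mul_ite]
      _ = ∑ k : Fin n,
          ((if y = glue g t k ∧ x ≠ glue g t (k + 1) then ζ ^ ((k : ℕ) : ℤ) else 0)
            + (if y = glue g t (k + 1) ∧ x ≠ glue g t k then
                -ζ ^ (2 * ((t : ℕ) : ℤ) - 1 - ((k : ℕ) : ℤ)) else 0)) := by
          refine Finset.sum_congr rfl fun k _ => ?_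
          simp only [nbMatrix, Matrix.of_apply, dF_fst, dF_snd, dB_fst, dB_snd, ite_mul,
            one_mul, zero_mul]
          by_cases h1 : y = glue g t k ∧ x ≠ glue g t (k + 1) <;>
            by_cases h2 : y = glue g t (k + 1) ∧ x ≠ glue g t k <;> simp [h1, h2] <;> split_ifs <;> simp_all
  rw [step1, Pi.smul_apply, smul_eq_mul]
  by_cases hy : ∃ m : Fin n, y = glue g t m
  · obtain ⟨m, hym⟩ := hy
    have hsum : (∑ k : Fin n,
        ((if y = glue g t k ∧ x ≠ glue g t (k + 1) then ζ ^ ((k : ℕ) : ℤ) else 0)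
          + (if y = glue g t (k + 1) ∧ x ≠ glue g t k then
              -ζ ^ (2 * ((t : ℕ) : ℤ) - 1 - ((k : ℕ) : ℤ)) else 0)))
        = (if x = glue g t (m + 1) then 0 else ζ ^ ((m : ℕ) : ℤ))
          + (if x = glue g t (m - 1) then 0 else
              -ζ ^ (2 * ((t : ℕ) : ℤ) - 1 - (((m - 1 : Fin n) : ℕ) : ℤ))) := by
      rw [Finset.sum_add_distrib]
      congr 1
      · rw [Finset.sum_congr rfl (fun k _ =>
          (show (if y = glue g t k ∧ x ≠ glue g t (k + 1) then ζ ^ ((k : ℕ) : ℤ) else 0)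
              = (if k = m then (if x = glue g t (m + 1) then 0 else ζ ^ ((m : ℕ) : ℤ)) else 0)
            from by
            by_cases hk : k = m
            · subst hk
              by_cases hx1 : x = glue g t (k + 1)
              · rw [if_neg (fun hc => hc.2 hx1), if_pos rfl, if_pos hx1]
              · rw [if_pos ⟨hym, hx1⟩, if_pos rfl, if_neg hx1]
            · rw [if_neg (fun hc => hk (glue_inj g t (hym.symm.trans hc.1)).symm), if_neg hk]))]
        rw [Finset.sum_ite_eq' Finset.univ m
          (fun _ => if x = glue g t (m + 1) then 0 else ζ ^ ((m : ℕ) : ℤ))]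
        simp
      · rw [Finset.sum_congr rfl (fun k _ =>
          (show (if y = glue g t (k + 1) ∧ x ≠ glue g t k then
                -ζ ^ (2 * ((t : ℕ) : ℤ) - 1 - ((k : ℕ) : ℤ)) else 0)
              = (if k = m - 1 then (if x = glue g t (m - 1) then 0 else
                -ζ ^ (2 * ((t : ℕ) : ℤ) - 1 - (((m - 1 : Fin n) : ℕ) : ℤ))) else 0)
            from by
            by_cases hk : k = m - 1
            · subst hk
              have hk1 : (m - 1) + 1 = m := sub_add_cancel m 1
              rw [hk1]
              by_cases hx2 : x = glue g t (m - 1)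
              · rw [if_neg (fun hc => hc.2 hx2), if_pos rfl, if_pos hx2]
              · rw [if_pos ⟨hym, hx2⟩, if_pos rfl, if_neg hx2]
            · rw [if_neg (fun hc => hk (eq_sub_iff_add_eq.mpr
                (glue_inj g t (hym.symm.trans hc.1)).symm)), if_neg hk]))]
        rw [Finset.sum_ite_eq' Finset.univ (m - 1)
          (fun _ => if x = glue g t (m - 1) then 0 else
            -ζ ^ (2 * ((t : ℕ) : ℤ) - 1 - (((m - 1 : Fin n) : ℕ) : ℤ)))]
        simp
    rw [hsum]
    have hadj : (onePointUnion Ghat (SimpleGraph.cycleGraph n) g t).Adj x (glue g t m) := by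
      rw [← hym]; exact hxy
    rcases adj_glue_cases Ghat g t hn x m hadj with h1 | h1 | ⟨hmt, a, ha⟩
    · -- x = glue (m+1) : d is the backward dart dB m
      have hne2 : x ≠ glue g t (m - 1) := by
        rw [h1]
        exact fun hc => add_one_ne_sub_one hn m (glue_inj g t hc)
      rw [if_pos h1, if_neg hne2, zero_add]
      have hd : (⟨(x, y), hxy⟩ : (onePointUnion Ghat (SimpleGraph.cycleGraph n) g t).Dart)
          = dB Ghat g t hn m :=
        SimpleGraph.Dart.ext _ _ (Prod.ext h1 hym)
      rw [hd, vv_dB]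
      have h' := (Int.ModEq.refl (2 * ((t : ℕ) : ℤ) - 1)).sub (val_sub_one_modEq hn m)
      have he : 2 * ((t : ℕ) : ℤ) - 1 - (((m : ℕ) : ℤ) - 1)
          = (2 * ((t : ℕ) : ℤ) - 1 - ((m : ℕ) : ℤ)) + 1 := by ring
      rw [he] at h'
      rw [zpow_modEq hn0 hζ h', zpow_add_one₀ hζ0]
      ring
    · -- x = glue (m-1) : d is the forward dart dF (m-1)
      have hne1 : x ≠ glue g t (m + 1) := by
        rw [h1]
        exact fun hc => add_one_ne_sub_one hn m (glue_inj g t hc.symm)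
      rw [if_neg hne1, if_pos h1, add_zero]
      have hd : (⟨(x, y), hxy⟩ : (onePointUnion Ghat (SimpleGraph.cycleGraph n) g t).Dart)
          = dF Ghat g t hn (m - 1) :=
        SimpleGraph.Dart.ext _ _
          (Prod.ext h1 (hym.trans (congrArg (glue g t) (sub_add_cancel m 1).symm)))
      rw [hd, vv_dF]
      have h' := (val_sub_one_modEq hn m).add_right 1
      have he : ((m : ℕ) : ℤ) - 1 + 1 = ((m : ℕ) : ℤ) := by ring
      rw [he] at h'
      rw [← zpow_modEq hn0 hζ h', zpow_add_one₀ hζ0]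
      ring
    · -- m = t and x lies in Ghat : both contributions cancel
      have hne1 : x ≠ glue g t (m + 1) := by
        rw [ha, show glue g t (m + 1) = Sum.inr ⟨m + 1, by rw [hmt]; exact add_one_ne hn t⟩
          from dif_neg (by rw [hmt]; exact add_one_ne hn t)]
        simp
      have hne2 : x ≠ glue g t (m - 1) := by
        rw [ha, show glue g t (m - 1) = Sum.inr ⟨m - 1, by rw [hmt]; exact sub_one_ne hn t⟩
          from dif_neg (by rw [hmt]; exact sub_one_ne hn t)]
        simp
      rw [if_neg hne1, if_neg hne2]
      have hv0 : vv Ghat g t hn ζ ⟨(x, y), hxy⟩ = 0 := by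
        refine vv_eq_zero Ghat g t hn ζ _ fun k => ⟨?_, ?_⟩
        · intro hdk
          have hy2 : y = glue g t (k + 1) :=
            congrArg (fun d => (SimpleGraph.Dart.toProd d).2) hdk
          have hx2 : x = glue g t k :=
            congrArg (fun d => (SimpleGraph.Dart.toProd d).1) hdk
          have hkm : k = m - 1 :=
            eq_sub_iff_add_eq.mpr (glue_inj g t (hym.symm.trans hy2)).symm
          exact hne2 (by rw [hx2, hkm])
        · intro hdk
          have hy2 : y = glue g t k :=
            congrArg (fun d => (SimpleGraph.Dart.toProd d).2) hdk
          have hx2 : x = glue g t (k + 1) :=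
            congrArg (fun d => (SimpleGraph.Dart.toProd d).1) hdk
          have hkm : k = m := (glue_inj g t (hym.symm.trans hy2)).symm
          exact hne1 (by rw [hx2, hkm])
      rw [hv0, mul_zero]
      subst hmt
      have h' := (Int.ModEq.refl (2 * ((m : ℕ) : ℤ) - 1)).sub (val_sub_one_modEq hn m)
      have he : 2 * ((m : ℕ) : ℤ) - 1 - (((m : ℕ) : ℤ) - 1) = ((m : ℕ) : ℤ) := by ring
      rw [he] at h'
      rw [zpow_modEq hn0 hζ h'.symm]
      ring
  · push_neg at hy
    have hl : (∑ k : Fin n,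
        ((if y = glue g t k ∧ x ≠ glue g t (k + 1) then ζ ^ ((k : ℕ) : ℤ) else 0)
          + (if y = glue g t (k + 1) ∧ x ≠ glue g t k then
              -ζ ^ (2 * ((t : ℕ) : ℤ) - 1 - ((k : ℕ) : ℤ)) else 0))) = 0 :=
      Finset.sum_eq_zero fun k _ => by
        rw [if_neg (fun hc => hy k hc.1), if_neg (fun hc => hy (k + 1) hc.1), add_zero]
    have hv0 : vv Ghat g t hn ζ ⟨(x, y), hxy⟩ = 0 := by
      refine vv_eq_zero Ghat g t hn ζ _ fun k => ⟨?_, ?_⟩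
      · intro hdk
        exact hy (k + 1) (congrArg (fun d => (SimpleGraph.Dart.toProd d).2) hdk)
      · intro hdk
        exact hy k (congrArg (fun d => (SimpleGraph.Dart.toProd d).2) hdk)
    rw [hl, hv0, mul_zero]

lemma mem_spectrum_aux (hn : 3 ≤ n) (ζ : ℂ) (hζ : ζ ^ n = 1) :
    ζ ∈ spectrum ℂ (nbMatrix (onePointUnion Ghat (SimpleGraph.cycleGraph n) g t)) := by
  have hn0 : n ≠ 0 := by omega
  have hζ0 : ζ ≠ 0 := by
    intro h0
    rw [h0, zero_pow hn0] at hζ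
    exact zero_ne_one hζ
  rw [spectrum.mem_iff]
  intro hunit
  rw [Matrix.isUnit_iff_isUnit_det] at hunit
  have hdet : (algebraMap ℂ _ ζ - nbMatrix (onePointUnion Ghat (SimpleGraph.cycleGraph n) g t)).det
      = 0 := by
    rw [← Matrix.exists_mulVec_eq_zero_iff]
    refine ⟨vv Ghat g t hn ζ, ?_, ?_⟩
    · intro h0
      have h1 := congrFun h0 (dF Ghat g t hn 0)
      rw [vv_dF] at h1
      simp only [Pi.zero_apply] at h1
      exact hζ0 (by simpa using pow_eq_zero_iff (n := 1) one_ne_zero |>.mp (by simpa using h1))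
    · rw [Matrix.sub_mulVec, mulVec_vv Ghat g t hn ζ hζ, Algebra.algebraMap_eq_smul_one,
        Matrix.smul_mulVec, Matrix.one_mulVec, sub_self]
  rw [hdet] at hunit
  simp at hunit

end Main

end NBAux

/-- If `G` is formed by identifying one vertex of a graph `Ĝ` with one vertex of the cycle
`C_n`, then every `n`-th root of unity `e^{2πij/n}`, `j = 0, …, n-1`, is an eigenvalue of the
non-backtracking matrix of `G`. -/
theorem roots_of_unity_mem_spectrum_nbMatrix_onePointUnion_cycle {V : Type*} [Fintype V]
    [DecidableEq V] (Ghat : SimpleGraph V) [DecidableRel Ghat.Adj] (n : ℕ) (hn : 3 ≤ n)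
    (g : V) (t : Fin n) :
    letI : DecidableRel (onePointUnion Ghat (SimpleGraph.cycleGraph n) g t).Adj :=
      Classical.decRel _
    ∀ j : ℕ, j < n →
      Complex.exp (2 * Real.pi * Complex.I * j / n) ∈
        spectrum ℂ (nbMatrix (onePointUnion Ghat (SimpleGraph.cycleGraph n) g t)) := by
  intro j hj
  haveI : NeZero n := ⟨by omega⟩
  have hζ : (Complex.exp (2 * Real.pi * Complex.I * j / n)) ^ n = 1 := by
    rw [← Complex.exp_nat_mul]
    have hn0 : (n : ℂ) ≠ 0 := Nat.cast_ne_zero.mpr (by omega)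
    have h : (n : ℂ) * (2 * Real.pi * Complex.I * j / n)
        = ((j : ℤ) : ℂ) * (2 * (Real.pi : ℂ) * Complex.I) := by
      field_simp
      push_cast
      ring
    rw [h]
    exact Complex.exp_int_mul_two_pi_mul_I (j : ℤ)
  exact NBAux.mem_spectrum_aux (inst := Classical.decRel _) Ghat g t hn _ hζ
end

section
/- For any graph G, 1 is an eigenvalue of K = [[A, D−I],[−I, 0]], and its geometric multiplicity equals the number of connected components of G. -/
open Matrix

/-- The matrix `K = [[A, D-I], [-I, 0]]`. -/
def Kmatrix {V : Type*} [Fintype V] [DecidableEq V] (G : SimpleGraph V)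
    [DecidableRel G.Adj] : Matrix (V ⊕ V) (V ⊕ V) ℂ :=
  Matrix.fromBlocks (G.adjMatrix ℂ) (Matrix.diagonal (fun v => (G.degree v : ℂ)) - 1) (-1) 0

section aux

variable {V : Type*} [Fintype V] [DecidableEq V] (G : SimpleGraph V) [DecidableRel G.Adj]

lemma lapMatrixC_eq : G.lapMatrix ℂ = (G.lapMatrix ℝ).map Complex.ofReal := by
  ext i j
  simp [SimpleGraph.lapMatrix, SimpleGraph.degMatrix, SimpleGraph.adjMatrix,
    Matrix.diagonal, apply_ite Complex.ofReal]

lemma mulVec_map_re (M : Matrix V V ℝ) (x : V → ℂ) (v : V) :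
    ((M.map Complex.ofReal *ᵥ x) v).re = (M *ᵥ fun u => (x u).re) v := by
  simp [Matrix.mulVec, dotProduct, Complex.re_sum, Complex.re_ofReal_mul]

lemma mulVec_map_im (M : Matrix V V ℝ) (x : V → ℂ) (v : V) :
    ((M.map Complex.ofReal *ᵥ x) v).im = (M *ᵥ fun u => (x u).im) v := by
  simp [Matrix.mulVec, dotProduct, Complex.im_sum, Complex.im_ofReal_mul]

lemma lapMatrixC_mulVec_eq_zero_iff (x : V → ℂ) :
    G.lapMatrix ℂ *ᵥ x = 0 ↔ ∀ i j : V, G.Adj i j → x i = x j := by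
  rw [lapMatrixC_eq]
  constructor
  · intro h i j hadj
    have hre : G.lapMatrix ℝ *ᵥ (fun u => (x u).re) = 0 := by
      ext v
      rw [← mulVec_map_re, h]
      rfl
    have him : G.lapMatrix ℝ *ᵥ (fun u => (x u).im) = 0 := by
      ext v
      rw [← mulVec_map_im, h]
      rfl
    rw [SimpleGraph.lapMatrix_mulVec_eq_zero_iff_forall_adj] at hre him
    exact Complex.ext (hre i j hadj) (him i j hadj)
  · intro h
    have hre : G.lapMatrix ℝ *ᵥ (fun u => (x u).re) = 0 := by
      rw [SimpleGraph.lapMatrix_mulVec_eq_zero_iff_forall_adj]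
      exact fun i j hadj => congrArg Complex.re (h i j hadj)
    have him : G.lapMatrix ℝ *ᵥ (fun u => (x u).im) = 0 := by
      rw [SimpleGraph.lapMatrix_mulVec_eq_zero_iff_forall_adj]
      exact fun i j hadj => congrArg Complex.im (h i j hadj)
    ext v
    exact Complex.ext (by rw [mulVec_map_re, hre]; rfl) (by rw [mulVec_map_im, him]; rfl)

lemma lapMatrixC_mulVec_eq_zero_iff_reachable (x : V → ℂ) :
    G.lapMatrix ℂ *ᵥ x = 0 ↔ ∀ i j : V, G.Reachable i j → x i = x j := by
  rw [lapMatrixC_mulVec_eq_zero_iff]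
  refine ⟨?_, fun h i j hA ↦ h i j hA.reachable⟩
  intro h i j ⟨w⟩
  induction w with
  | nil => rfl
  | cons hA _ h' => exact (h _ _ hA).trans h'

open Finset in
lemma finrank_ker_lapMatrixC :
    Module.finrank ℂ (LinearMap.ker (Matrix.toLin' (G.lapMatrix ℂ)))
      = Nat.card G.ConnectedComponent := by
  classical
  set f : G.ConnectedComponent → LinearMap.ker (Matrix.toLin' (G.lapMatrix ℂ)) :=
    fun c => ⟨fun i ↦ if G.connectedComponentMk i = c then (1 : ℂ) else 0, by
      rw [LinearMap.mem_ker, Matrix.toLin'_apply, lapMatrixC_mulVec_eq_zero_iff_reachable]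
      intro i j h
      split_ifs with h₁ h₂ h₃
      · rfl
      · rw [← SimpleGraph.ConnectedComponent.eq] at h
        exact (h₂ (h₁ ▸ h.symm)).elim
      · rw [← SimpleGraph.ConnectedComponent.eq] at h
        exact (h₁ (h₃ ▸ h)).elim
      · rfl⟩ with hf
  have hli : LinearIndependent ℂ f := by
    rw [Fintype.linearIndependent_iff]
    intro g h0
    rw [Subtype.ext_iff] at h0
    have h : ∑ c, g c • f c = fun i ↦ g (G.connectedComponentMk i) := by
      simp only [hf, SetLike.mk_smul_mk, AddSubmonoid.coe_finset_sum]
      repeat rw [AddSubmonoid.coe_finset_sum]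
      ext i
      simp only [Finset.sum_apply, Pi.smul_apply, smul_eq_mul, mul_ite, mul_one, mul_zero,
        sum_ite_eq, mem_univ, ↓reduceIte]
    rw [h] at h0
    intro c
    obtain ⟨i, h'⟩ : ∃ i : V, G.connectedComponentMk i = c := Quot.exists_rep c
    exact h' ▸ congrFun h0 i
  have hsp : ⊤ ≤ Submodule.span ℂ (Set.range f) := by
    intro x _
    rw [Finsupp.mem_span_range_iff_exists_finsupp]
    have hx : ∀ i j : V, G.Reachable i j → x.val i = x.val j := by
      rw [← lapMatrixC_mulVec_eq_zero_iff_reachable G x, ← Matrix.toLin'_apply,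
        LinearMap.map_coe_ker]
    refine ⟨Finsupp.equivFunOnFinite.symm (Quot.lift x.val hx), ?_⟩
    rw [Finsupp.sum_fintype _ _ (by simp)]
    ext j
    rw [AddSubmonoid.coe_finset_sum]
    simp only [hf, Finsupp.coe_equivFunOnFinite_symm, SetLike.mk_smul_mk,
      Finset.sum_apply, Pi.smul_apply, smul_eq_mul, mul_ite, mul_one,
      mul_zero, sum_ite_eq, mem_univ, ↓reduceIte]
    rfl
  rw [Module.finrank_eq_card_basis (Module.Basis.mk hli hsp), Nat.card_eq_fintype_card]

/-- The map `y ↦ (-y, y)`. -/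
def phiMap : (V → ℂ) →ₗ[ℂ] (V ⊕ V → ℂ) where
  toFun y := Sum.elim (-y) y
  map_add' a b := by ext (v | v) <;> simp <;> ring
  map_smul' c a := by ext (v | v) <;> simp

lemma phiMap_injective : Function.Injective (phiMap (V := V)) := by
  intro a b h
  ext v
  exact congrFun h (Sum.inr v)

lemma Kmatrix_sub_one :
    Kmatrix G - 1 = Matrix.fromBlocks (G.adjMatrix ℂ - 1)
      (Matrix.diagonal (fun v => (G.degree v : ℂ)) - 1) (-1) (-1) := by
  rw [Kmatrix, ← Matrix.fromBlocks_one, sub_eq_add_neg, Matrix.fromBlocks_neg,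
    Matrix.fromBlocks_add]
  congr 1 <;> simp [sub_eq_add_neg]

lemma Kmatrix_mulVec_eq_zero_iff (z : V ⊕ V → ℂ) :
    (Kmatrix G - 1) *ᵥ z = 0 ↔
      z ∘ Sum.inl = -(z ∘ Sum.inr) ∧ G.lapMatrix ℂ *ᵥ (z ∘ Sum.inr) = 0 := by
  rw [Kmatrix_sub_one, Matrix.fromBlocks_mulVec]
  have helim : ∀ (a b : V → ℂ), Sum.elim a b = 0 ↔ a = 0 ∧ b = 0 := by
    intro a b
    constructor
    · intro h
      exact ⟨funext fun v => congrFun h (Sum.inl v), funext fun v => congrFun h (Sum.inr v)⟩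
    · rintro ⟨ha, hb⟩; rw [ha, hb]; ext (v | v) <;> rfl
  rw [helim]
  have hL : G.lapMatrix ℂ = Matrix.diagonal (fun v => (G.degree v : ℂ)) - G.adjMatrix ℂ := rfl
  constructor
  · rintro ⟨h1, h2⟩
    have hx : z ∘ Sum.inl = -(z ∘ Sum.inr) := by
      have : ∀ v, -(z (Sum.inl v)) + -(z (Sum.inr v)) = 0 := by
        intro v
        have := congrFun h2 v
        simpa [Matrix.neg_mulVec, Matrix.one_mulVec] using this
      ext v
      have := this v
      simp only [Pi.neg_apply, Function.comp_apply]
      linear_combination -this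
    refine ⟨hx, ?_⟩
    have := h1
    rw [hx] at this
    rw [hL]
    calc (Matrix.diagonal (fun v => (G.degree v : ℂ)) - G.adjMatrix ℂ) *ᵥ (z ∘ Sum.inr)
        = (G.adjMatrix ℂ - 1) *ᵥ (-(z ∘ Sum.inr))
          + (Matrix.diagonal (fun v => (G.degree v : ℂ)) - 1) *ᵥ (z ∘ Sum.inr) := by
          simp [Matrix.sub_mulVec, Matrix.mulVec_neg, Matrix.one_mulVec]
      _ = 0 := this
  · rintro ⟨hx, hL0⟩
    constructor
    · rw [hx]
      rw [hL] at hL0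
      calc (G.adjMatrix ℂ - 1) *ᵥ (-(z ∘ Sum.inr))
            + (Matrix.diagonal (fun v => (G.degree v : ℂ)) - 1) *ᵥ (z ∘ Sum.inr)
          = (Matrix.diagonal (fun v => (G.degree v : ℂ)) - G.adjMatrix ℂ) *ᵥ (z ∘ Sum.inr) := by
            simp [Matrix.sub_mulVec, Matrix.mulVec_neg, Matrix.one_mulVec]
        _ = 0 := hL0
    · ext v
      have := congrFun hx v
      simp only [Function.comp_apply, Pi.neg_apply] at this
      simp [Matrix.neg_mulVec, Matrix.one_mulVec, this]

lemma map_phiMap_ker :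
    Submodule.map (phiMap (V := V)) (LinearMap.ker (Matrix.toLin' (G.lapMatrix ℂ)))
      = LinearMap.ker (Matrix.toLin' (Kmatrix G - 1)) := by
  ext z
  simp only [Submodule.mem_map, LinearMap.mem_ker, Matrix.toLin'_apply]
  constructor
  · rintro ⟨y, hy, rfl⟩
    rw [Kmatrix_mulVec_eq_zero_iff]
    constructor
    · ext v; rfl
    · simpa [phiMap] using hy
  · intro hz
    rw [Kmatrix_mulVec_eq_zero_iff] at hz
    refine ⟨z ∘ Sum.inr, hz.2, ?_⟩
    ext (v | v)
    · exact (congrFun hz.1 v).symm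
    · rfl

end aux

/-- `1` is an eigenvalue of `K = [[A, D-I], [-I, 0]]`, with geometric multiplicity equal to
the number of connected components of `G`. -/
theorem one_mem_spectrum_Kmatrix {V : Type*} [Fintype V] [DecidableEq V] [Nonempty V]
    (G : SimpleGraph V) [DecidableRel G.Adj] :
    (1 : ℂ) ∈ spectrum ℂ (Kmatrix G) ∧
    Module.finrank ℂ (LinearMap.ker (Matrix.toLin' (Kmatrix G - 1)))
      = Nat.card G.ConnectedComponent := by
  classical
  have hker : Module.finrank ℂ (LinearMap.ker (Matrix.toLin' (Kmatrix G - 1)))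
      = Nat.card G.ConnectedComponent := by
    rw [← map_phiMap_ker G,
      ← LinearEquiv.finrank_eq (Submodule.equivMapOfInjective _ phiMap_injective
        (LinearMap.ker (Matrix.toLin' (G.lapMatrix ℂ)))),
      finrank_ker_lapMatrixC]
  refine ⟨?_, hker⟩
  rw [spectrum.mem_iff]
  intro hu
  rw [Matrix.isUnit_iff_isUnit_det] at hu
  have hv : (Kmatrix G - 1) *ᵥ Sum.elim (fun _ : V => (-1 : ℂ)) (fun _ => 1) = 0 := by
    rw [Kmatrix_mulVec_eq_zero_iff]
    constructor
    · ext v; rfl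
    · have := G.lapMatrix_mulVec_const_eq_zero (R := ℂ)
      convert this using 2
      rfl
  have hdet : (Kmatrix G - 1).det = 0 := by
    rw [← Matrix.exists_mulVec_eq_zero_iff]
    refine ⟨Sum.elim (fun _ : V => (-1 : ℂ)) (fun _ => 1), ?_, hv⟩
    intro h
    have := congrFun h (Sum.inr (Classical.arbitrary V))
    simp at this
  have h1 : (algebraMap ℂ (Matrix (V ⊕ V) (V ⊕ V) ℂ)) 1 - Kmatrix G = -(Kmatrix G - 1) := by
    simp
  rw [h1, Matrix.det_neg, hdet, mul_zero] at hu
  exact (not_isUnit_zero hu).elim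
end

section
/- If G is a connected graph with minimum degree at least 2, then every eigenvalue μ of the non-backtracking matrix B satisfies |μ| ≥ 1. -/
open Matrix

open Finset

/-- If `G` is a connected graph with minimum degree at least 2, then every eigenvalue `μ` of
its non-backtracking matrix satisfies `|μ| ≥ 1`. -/
theorem one_le_abs_eigenvalue_nbMatrix {V : Type*} [Fintype V] [DecidableEq V]
    (G : SimpleGraph V) [DecidableRel G.Adj] (hconn : G.Connected)
    (hdeg : ∀ v : V, 2 ≤ G.degree v) :
    ∀ μ ∈ spectrum ℂ (nbMatrix G), 1 ≤ ‖μ‖ := by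
  intro μ hμ
  rw [spectrum.mem_iff] at hμ
  have hdet : ((algebraMap ℂ (Matrix G.Dart G.Dart ℂ)) μ - nbMatrix G).det = 0 := by
    by_contra hd
    exact hμ ((Matrix.isUnit_iff_isUnit_det _).mpr (isUnit_iff_ne_zero.mpr hd))
  obtain ⟨x, hx0, hxe⟩ := (Matrix.exists_mulVec_eq_zero_iff).mpr hdet
  have hBx : ∀ d, (nbMatrix G).mulVec x d = μ * x d := by
    intro d
    have h1 := congrFun hxe d
    rw [Matrix.sub_mulVec, Algebra.algebraMap_eq_smul_one, Matrix.smul_mulVec,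
      Matrix.one_mulVec] at h1
    have h2 : μ • x d - (nbMatrix G).mulVec x d = 0 := h1
    rw [sub_eq_zero] at h2
    simpa [smul_eq_mul] using h2.symm
  -- g v = sum of x over darts with tail v
  set g : V → ℂ := fun v => ∑ d : G.Dart, if d.toProd.1 = v then x d else 0 with hgdef
  have hx1 : ∀ d : G.Dart, μ * x d = g d.toProd.2 - x d.symm := by
    intro d
    rw [← hBx d]
    have hmv : (nbMatrix G).mulVec x d
        = ∑ e : G.Dart, if d.toProd.2 = e.toProd.1 ∧ d.toProd.1 ≠ e.toProd.2 then x e else 0 := by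
      simp [nbMatrix, Matrix.mulVec, dotProduct, ite_mul]
    rw [hmv, hgdef]
    have key : ∀ e : G.Dart,
        (if d.toProd.2 = e.toProd.1 ∧ d.toProd.1 ≠ e.toProd.2 then x e else 0)
        = (if e.toProd.1 = d.toProd.2 then x e else 0) - (if e = d.symm then x e else 0) := by
      intro e
      have hsymm : e = d.symm ↔ e.toProd.1 = d.toProd.2 ∧ e.toProd.2 = d.toProd.1 := by
        rw [SimpleGraph.Dart.ext_iff, Prod.ext_iff]
        simp [SimpleGraph.Dart.symm]
      by_cases h1 : e.toProd.1 = d.toProd.2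
      · by_cases h2 : e.toProd.2 = d.toProd.1
        · rw [if_neg (fun h => h.2 h2.symm), if_pos h1, if_pos (hsymm.mpr ⟨h1, h2⟩), sub_self]
        · rw [if_pos ⟨h1.symm, fun h => h2 h.symm⟩, if_pos h1,
            if_neg (fun h => h2 (hsymm.mp h).2), sub_zero]
      · rw [if_neg (fun h => h1 h.1.symm), if_neg h1,
          if_neg (fun h => h1 (hsymm.mp h).1), sub_zero]
    rw [Finset.sum_congr rfl fun e _ => key e, Finset.sum_sub_distrib,
      Finset.sum_ite_eq' Finset.univ d.symm x]
    simp
  have hx2 : ∀ d : G.Dart, μ * x d.symm = g d.toProd.1 - x d := by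
    intro d
    simpa using hx1 d.symm
  have hx3 : ∀ d : G.Dart, μ ^ 2 * x d = μ * g d.toProd.2 - g d.toProd.1 + x d := by
    intro d
    linear_combination μ * hx1 d - hx2 d
  -- case A : g = 0
  by_cases hg0 : ∀ v, g v = 0
  · obtain ⟨d, hd⟩ := Function.ne_iff.mp hx0
    have hd' : x d ≠ 0 := by simpa using hd
    have h1 := hx1 d
    have h2 := hx2 d
    rw [hg0] at h1 h2
    have h3 : μ ^ 2 * x d = x d := by linear_combination μ * h1 - h2
    have h4 : (μ ^ 2 - 1) * x d = 0 := by linear_combination h3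
    have h5 : μ ^ 2 = 1 := by
      rcases mul_eq_zero.mp h4 with h | h
      · exact sub_eq_zero.mp h
      · exact absurd h hd'
    have h6 : ‖μ‖ ^ 2 = 1 := by
      rw [← norm_pow, h5, norm_one]
    nlinarith [norm_nonneg μ]
  · push_neg at hg0
    obtain ⟨v0, hv0⟩ := hg0
    -- degree counting
    have hcard : ∀ v : V, #(Finset.univ.filter fun d : G.Dart => d.toProd.1 = v)
        = G.degree v := fun v => G.dart_fst_fiber_card_eq_degree v
    -- vertex-level equation
    set T : V → ℂ := fun v => ∑ d : G.Dart, if d.toProd.1 = v then g d.toProd.2 else 0 with hTdef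
    have hdegC : ∀ v : V, (∑ d : G.Dart, if d.toProd.1 = v then (1 : ℂ) else 0)
        = (G.degree v : ℂ) := by
      intro v
      rw [Finset.sum_boole, hcard v]
    have hg4 : ∀ v : V, μ ^ 2 * g v = μ * T v - (G.degree v : ℂ) * g v + g v := by
      intro v
      have e1 : μ ^ 2 * g v = ∑ d : G.Dart, if d.toProd.1 = v then μ ^ 2 * x d else 0 := by
        rw [hgdef, Finset.mul_sum]
        exact Finset.sum_congr rfl fun d _ => by split <;> simp
      have e2 : ∑ d : G.Dart, (if d.toProd.1 = v then μ ^ 2 * x d else 0)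
          = ∑ d : G.Dart, ((if d.toProd.1 = v then μ * g d.toProd.2 else 0)
            - (if d.toProd.1 = v then g d.toProd.1 else 0)
            + (if d.toProd.1 = v then x d else 0)) := by
        refine Finset.sum_congr rfl fun d _ => ?_
        by_cases h : d.toProd.1 = v
        · simp only [if_pos h, hx3 d]
        · simp [h]
      have e3 : ∑ d : G.Dart, (if d.toProd.1 = v then μ * g d.toProd.2 else 0) = μ * T v := by
        rw [hTdef, Finset.mul_sum]
        exact Finset.sum_congr rfl fun d _ => by split <;> simp
      have e4 : ∑ d : G.Dart, (if d.toProd.1 = v then g d.toProd.1 else 0)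
          = (G.degree v : ℂ) * g v := by
        have : ∀ d : G.Dart, (if d.toProd.1 = v then g d.toProd.1 else 0)
            = (if d.toProd.1 = v then (1 : ℂ) else 0) * g v := by
          intro d; by_cases h : d.toProd.1 = v <;> simp [h]
        rw [Finset.sum_congr rfl fun d _ => this d, ← Finset.sum_mul, hdegC]
      have e5 : ∑ d : G.Dart, (if d.toProd.1 = v then x d else 0) = g v := by rw [hgdef]
      rw [e1, e2, Finset.sum_add_distrib, Finset.sum_sub_distrib, e3, e4, e5]
    -- scalar sums
    set c : V → ℂ := fun v => (starRingEnd ℂ) (g v) with hcdef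
    set Sr : ℝ := ∑ v : V, Complex.normSq (g v) with hSrdef
    set Qdr : ℝ := ∑ v : V, (G.degree v : ℝ) * Complex.normSq (g v) with hQdrdef
    set a : ℂ := ∑ d : G.Dart, c d.toProd.1 * g d.toProd.2 with hadef
    have hcg : ∀ v : V, c v * g v = (Complex.normSq (g v) : ℂ) := by
      intro v
      show (starRingEnd ℂ) (g v) * g v = _
      rw [mul_comm, Complex.mul_conj]
    have hSg : ∑ v : V, c v * g v = (Sr : ℂ) := by
      rw [hSrdef]
      push_cast
      exact Finset.sum_congr rfl fun v _ => hcg v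
    have hQg : ∑ v : V, (G.degree v : ℂ) * (c v * g v) = (Qdr : ℂ) := by
      rw [hQdrdef]
      push_cast
      exact Finset.sum_congr rfl fun v _ => by rw [hcg v]
    have ha : ∑ v : V, c v * T v = a := by
      rw [hadef, hTdef]
      calc ∑ v : V, c v * ∑ d : G.Dart, (if d.toProd.1 = v then g d.toProd.2 else 0)
          = ∑ v : V, ∑ d : G.Dart, (if d.toProd.1 = v then c v * g d.toProd.2 else 0) := by
            refine Finset.sum_congr rfl fun v _ => ?_
            rw [Finset.mul_sum]
            exact Finset.sum_congr rfl fun d _ => by split <;> simp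
        _ = ∑ d : G.Dart, ∑ v : V, (if d.toProd.1 = v then c v * g d.toProd.2 else 0) :=
            Finset.sum_comm
        _ = ∑ d : G.Dart, c d.toProd.1 * g d.toProd.2 := by
            refine Finset.sum_congr rfl fun d _ => ?_
            rw [Finset.sum_ite_eq]
            simp
    have hE : μ ^ 2 * (Sr : ℂ) = μ * a - (Qdr : ℂ) + (Sr : ℂ) := by
      have h0 : ∑ v : V, c v * (μ ^ 2 * g v)
          = ∑ v : V, c v * (μ * T v - (G.degree v : ℂ) * g v + g v) :=
        Finset.sum_congr rfl fun v _ => by rw [hg4 v]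
      have hL : ∑ v : V, c v * (μ ^ 2 * g v) = μ ^ 2 * (Sr : ℂ) := by
        rw [← hSg, Finset.mul_sum]
        exact Finset.sum_congr rfl fun v _ => by ring
      have hR : ∑ v : V, c v * (μ * T v - (G.degree v : ℂ) * g v + g v)
          = μ * a - (Qdr : ℂ) + (Sr : ℂ) := by
        have hptw : ∀ v : V, c v * (μ * T v - (G.degree v : ℂ) * g v + g v)
            = μ * (c v * T v) - (G.degree v : ℂ) * (c v * g v) + c v * g v :=
          fun v => by ring
        rw [Finset.sum_congr rfl fun v _ => hptw v, Finset.sum_add_distrib,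
          Finset.sum_sub_distrib, ← Finset.mul_sum, ha, hQg, hSg]
      rw [← hL, h0, hR]
    -- symmetry of a
    have hsymmsum : ∀ {M : Type} [AddCommMonoid M] (f : G.Dart → M),
        ∑ d : G.Dart, f d = ∑ d : G.Dart, f d.symm := by
      intro M _ f
      exact Fintype.sum_equiv (Function.Involutive.toPerm _ SimpleGraph.Dart.symm_involutive)
        _ _ (fun d => rfl)
    have ha_conj : (starRingEnd ℂ) a = a := by
      rw [hadef, map_sum]
      have h1 : ∀ d : G.Dart, (starRingEnd ℂ) (c d.toProd.1 * g d.toProd.2)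
          = c d.toProd.2 * g d.toProd.1 := by
        intro d
        simp only [_root_.map_mul, hcdef, Complex.conj_conj]
        ring
      rw [Finset.sum_congr rfl fun d _ => h1 d, hsymmsum fun d => c d.toProd.2 * g d.toProd.1]
      simp
    -- positivity
    have hSr : 0 < Sr := by
      have h1 : Complex.normSq (g v0) ≤ Sr :=
        Finset.single_le_sum (fun v _ => Complex.normSq_nonneg (g v)) (Finset.mem_univ v0)
      have h2 : 0 < Complex.normSq (g v0) := Complex.normSq_pos.mpr hv0
      linarith
    have hQ2 : 2 * Sr ≤ Qdr := by
      rw [hSrdef, hQdrdef, Finset.mul_sum]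
      refine Finset.sum_le_sum fun v _ => ?_
      have : (2 : ℝ) ≤ (G.degree v : ℝ) := by exact_mod_cast hdeg v
      exact mul_le_mul_of_nonneg_right this (Complex.normSq_nonneg _)
    by_contra hlt
    push_neg at hlt
    by_cases him : μ.im = 0
    · -- real case
      set r : ℝ := μ.re with hrdef
      have hμr : μ = (r : ℂ) := by
        apply Complex.ext <;> simp [hrdef, him]
      -- |a| ≤ Qdr
      have hfib : ∑ d : G.Dart, Complex.normSq (g d.toProd.1) = Qdr := by
        rw [hQdrdef]
        calc ∑ d : G.Dart, Complex.normSq (g d.toProd.1)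
            = ∑ d : G.Dart, ∑ v : V, (if d.toProd.1 = v then Complex.normSq (g v) else 0) := by
              refine Finset.sum_congr rfl fun d _ => ?_
              rw [Finset.sum_ite_eq]
              simp
          _ = ∑ v : V, ∑ d : G.Dart, (if d.toProd.1 = v then Complex.normSq (g v) else 0) :=
              Finset.sum_comm
          _ = ∑ v : V, (G.degree v : ℝ) * Complex.normSq (g v) := by
              refine Finset.sum_congr rfl fun v _ => ?_
              have : ∀ d : G.Dart, (if d.toProd.1 = v then Complex.normSq (g v) else 0)
                  = (if d.toProd.1 = v then (1 : ℝ) else 0) * Complex.normSq (g v) := by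
                intro d; by_cases h : d.toProd.1 = v <;> simp [h]
              rw [Finset.sum_congr rfl fun d _ => this d, ← Finset.sum_mul, Finset.sum_boole,
                hcard v]
      have hfib2 : ∑ d : G.Dart, Complex.normSq (g d.toProd.2) = Qdr := by
        rw [← hfib, hsymmsum fun d : G.Dart => Complex.normSq (g d.toProd.1)]
        simp
      have habs : ‖a‖ ≤ Qdr := by
        rw [hadef]
        calc ‖∑ d : G.Dart, c d.toProd.1 * g d.toProd.2‖
            ≤ ∑ d : G.Dart, ‖c d.toProd.1 * g d.toProd.2‖ :=
              norm_sum_le _ _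
          _ ≤ ∑ d : G.Dart, (Complex.normSq (g d.toProd.1) + Complex.normSq (g d.toProd.2)) / 2 := by
              refine Finset.sum_le_sum fun d _ => ?_
              have e1 : ‖c d.toProd.1 * g d.toProd.2‖
                  = ‖g d.toProd.1‖ * ‖g d.toProd.2‖ := by
                rw [norm_mul]
                simp [hcdef]
              rw [e1, Complex.normSq_eq_norm_sq, Complex.normSq_eq_norm_sq]
              nlinarith [sq_nonneg (‖g d.toProd.1‖ - ‖g d.toProd.2‖),
                norm_nonneg (g d.toProd.1),
                norm_nonneg (g d.toProd.2)]
          _ = Qdr := by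
              rw [← Finset.sum_div, Finset.sum_add_distrib, hfib, hfib2]
              ring
      -- a is real
      have haa : a = (a.re : ℂ) := (Complex.conj_eq_iff_re.mp ha_conj).symm
      set ar : ℝ := a.re with hardef
      have hrE : r ^ 2 * Sr = r * ar - Qdr + Sr := by
        have h := hE
        rw [hμr, haa] at h
        exact_mod_cast h
      have har : |ar| ≤ Qdr := le_trans (Complex.abs_re_le_norm a) habs
      have hr1 : |r| < 1 := by
        have := hlt
        rw [hμr, Complex.norm_real] at this
        exact this
      have h1t : (0 : ℝ) < 1 - |r| := by linarith
      have hbound : r * ar ≤ |r| * Qdr := by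
        calc r * ar ≤ |r * ar| := le_abs_self _
          _ = |r| * |ar| := abs_mul r ar
          _ ≤ |r| * Qdr := mul_le_mul_of_nonneg_left har (abs_nonneg r)
      nlinarith [mul_le_mul_of_nonneg_left hQ2 (le_of_lt h1t),
        mul_pos hSr (mul_pos h1t h1t), sq_abs r, abs_nonneg r]
    · -- complex case
      have hEc : ((starRingEnd ℂ) μ) ^ 2 * (Sr : ℂ)
          = (starRingEnd ℂ) μ * a - (Qdr : ℂ) + (Sr : ℂ) := by
        have := congrArg (starRingEnd ℂ) hE
        simpa [_root_.map_mul, map_pow, Complex.conj_ofReal, ha_conj] using this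
      have hδ : μ - (starRingEnd ℂ) μ ≠ 0 := by
        rw [Complex.sub_conj]
        simp [him, Complex.ext_iff]
      have hsum : (μ + (starRingEnd ℂ) μ) * (Sr : ℂ) = a := by
        have h3 : (μ - (starRingEnd ℂ) μ) * ((μ + (starRingEnd ℂ) μ) * (Sr : ℂ))
            = (μ - (starRingEnd ℂ) μ) * a := by linear_combination hE - hEc
        exact mul_left_cancel₀ hδ h3
      have h2 : (Complex.normSq μ : ℂ) * (Sr : ℂ) = (Qdr : ℂ) - (Sr : ℂ) := by
        rw [← Complex.mul_conj]
        linear_combination μ * hsum - hE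
      have h3 : Complex.normSq μ * Sr = Qdr - Sr := by exact_mod_cast h2
      have h4 : 1 ≤ Complex.normSq μ := by nlinarith
      have h5 : ‖μ‖ ^ 2 = Complex.normSq μ := by
        rw [Complex.sq_norm]
      nlinarith [norm_nonneg μ]
end

section
/- If G is a tree, then 1, −1, and 0 are all eigenvalues of K = [[A, D−I],[−I, 0]], and the eigenvalue 0 has multiplicity at least r, where r is the number of leaves (degree-1 vertices) of G. -/
open Matrix Polynomial

section Aux

/-- Trees are 2-colorable: there is a ±1 vector flipping sign across each edge. -/
lemma tree_two_coloring {V : Type*} {G : SimpleGraph V} (hT : G.IsTree) :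
    ∃ x : V → ℂ, (∀ v, x v = 1 ∨ x v = -1) ∧ ∀ ⦃u v⦄, G.Adj u v → x v = - x u := by
  classical
  obtain ⟨r⟩ := hT.isConnected.nonempty
  have hEU := hT.existsUnique_path
  set p : ∀ v, G.Walk r v := fun v => (hEU r v).choose with hpdef
  have hpath : ∀ v, (p v).IsPath := fun v => (hEU r v).choose_spec.1
  have huniq : ∀ (v : V) (q : G.Walk r v), q.IsPath → q = p v :=
    fun v q hq => (hEU r v).choose_spec.2 q hq
  have hflip : ∀ ⦃u v : V⦄, G.Adj u v →
      (p u).length + 1 = (p v).length ∨ (p v).length + 1 = (p u).length := by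
    intro u v huv
    by_cases hv : v ∈ (p u).support
    · right
      have h1 : ((p u).takeUntil v hv) = p v := huniq v _ ((hpath u).takeUntil hv)
      have h2 : ((p u).dropUntil v hv) = SimpleGraph.Walk.cons huv.symm SimpleGraph.Walk.nil := by
        obtain ⟨q, hq, hq'⟩ := hEU v u
        rw [hq' ((p u).dropUntil v hv) ((hpath u).dropUntil hv),
          hq' (SimpleGraph.Walk.cons huv.symm SimpleGraph.Walk.nil)
            (by simp [SimpleGraph.Walk.isPath_def, huv.symm.ne])]
      have hlen := congrArg SimpleGraph.Walk.length ((p u).take_spec hv)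
      rw [SimpleGraph.Walk.length_append, h1, h2] at hlen
      simpa using hlen
    · left
      have hcp : ((p u).concat huv).IsPath := by
        rw [SimpleGraph.Walk.isPath_def, SimpleGraph.Walk.support_concat]
        exact List.Nodup.append (hpath u).support_nodup (List.nodup_singleton v)
          (by simpa using hv)
      have := congrArg SimpleGraph.Walk.length (huniq v _ hcp)
      rwa [SimpleGraph.Walk.length_concat] at this
  refine ⟨fun v => (-1 : ℂ) ^ (p v).length, fun v => ?_, ?_⟩
  · rcases Nat.even_or_odd (p v).length with h | h
    · left; exact h.neg_one_pow
    · right; exact h.neg_one_pow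
  · intro u v huv
    simp only
    rcases hflip huv with h | h
    · rw [← h, pow_succ]; ring
    · rw [← h, pow_succ]; ring

/-- An eigenvector witness puts the eigenvalue in the spectrum. -/
lemma mem_spectrum_of_vec {n : Type*} [Fintype n] [DecidableEq n] (M : Matrix n n ℂ) (μ : ℂ)
    (v : n → ℂ) (hv : v ≠ 0) (h : M.mulVec v = μ • v) : μ ∈ spectrum ℂ M := by
  rw [spectrum.mem_iff]
  intro hu
  rw [Matrix.isUnit_iff_isUnit_det] at hu
  have hdet : (algebraMap ℂ (Matrix n n ℂ) μ - M).det = 0 := by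
    rw [← Matrix.exists_mulVec_eq_zero_iff]
    refine ⟨v, hv, ?_⟩
    rw [Matrix.sub_mulVec, Algebra.algebraMap_eq_smul_one, Matrix.smul_mulVec,
      Matrix.one_mulVec, h, sub_self]
  rw [hdet] at hu
  exact hu.ne_zero rfl

/-- A tree on at least two vertices has a leaf. -/
lemma tree_exists_leaf {V : Type*} [Fintype V] [DecidableEq V] (G : SimpleGraph V)
    [DecidableRel G.Adj] (hT : G.IsTree) (hcard : 2 ≤ Fintype.card V) :
    ∃ v, G.degree v = 1 := by
  classical
  by_contra h
  push_neg at h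
  have hpos : ∀ v : V, 0 < G.degree v := by
    intro v
    rw [SimpleGraph.degree_pos_iff_exists_adj]
    obtain ⟨w, hw⟩ := Fintype.exists_ne_of_one_lt_card hcard v
    obtain ⟨q⟩ := (hT.isConnected w v).symm
    cases q with
    | nil => exact absurd rfl hw
    | cons hadj _ => exact ⟨_, hadj⟩
  have h2 : ∀ v : V, 2 ≤ G.degree v := by
    intro v
    rcases Nat.lt_or_ge (G.degree v) 2 with hlt | hge
    · interval_cases hd : G.degree v
      · exact absurd hd (hpos v).ne'
      · exact absurd hd (h v)
    · exact hge
  have hsum := G.sum_degrees_eq_twice_card_edges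
  have he := hT.card_edgeFinset
  have : 2 * Fintype.card V ≤ ∑ v : V, G.degree v := by
    calc 2 * Fintype.card V = ∑ _v : V, 2 := by simp [mul_comm]
    _ ≤ _ := Finset.sum_le_sum fun v _ => h2 v
  omega

end Aux

lemma K_mulVec {V : Type*} [Fintype V] [DecidableEq V] (G : SimpleGraph V)
    [DecidableRel G.Adj] (a b : V → ℂ) :
    (Kmatrix G).mulVec (Sum.elim a b) = Sum.elim
      (fun v => (∑ u ∈ G.neighborFinset v, a u) + (G.degree v : ℂ) * b v - b v)
      (fun v => - a v) := by
  rw [Kmatrix, Matrix.fromBlocks_mulVec]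
  ext (v | v)
  · simp only [Sum.elim_inl, Pi.add_apply, Matrix.sub_mulVec, Pi.sub_apply,
      Matrix.mulVec_diagonal, SimpleGraph.adjMatrix_mulVec_apply, Matrix.one_mulVec,
      Sum.elim_comp_inl, Sum.elim_comp_inr]
    ring
  · simp [Matrix.neg_mulVec, Matrix.one_mulVec, Matrix.zero_mulVec]

/-- If `G` is a tree on at least two vertices, then `1`, `-1` and `0` are eigenvalues of
`K = [[A, D-I], [-I, 0]]`, and the eigenvalue `0` has (algebraic) multiplicity at least the
number of leaves of `G`. -/
theorem spectrum_Kmatrix_tree {V : Type*} [Fintype V] [DecidableEq V] (G : SimpleGraph V)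
    [DecidableRel G.Adj] (hT : G.IsTree) (hcard : 2 ≤ Fintype.card V) :
    (1 : ℂ) ∈ spectrum ℂ (Kmatrix G) ∧
    (-1 : ℂ) ∈ spectrum ℂ (Kmatrix G) ∧
    (0 : ℂ) ∈ spectrum ℂ (Kmatrix G) ∧
    Fintype.card {v : V // G.degree v = 1}
      ≤ (Kmatrix G).charpoly.rootMultiplicity 0 := by
  classical
  have hne : Nonempty V := Fintype.card_pos_iff.mp (by omega)
  obtain ⟨v0⟩ := hne
  refine ⟨?_, ?_, ?_, ?_⟩
  · -- eigenvalue 1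
    refine mem_spectrum_of_vec _ _ (Sum.elim (fun _ => (1 : ℂ)) (fun _ => (-1 : ℂ))) ?_ ?_
    · intro h0
      have := congrFun h0 (Sum.inl v0)
      simp at this
    · rw [K_mulVec]
      ext (v | v)
      · simp [Finset.sum_const, SimpleGraph.card_neighborFinset_eq_degree]
      · simp
  · -- eigenvalue -1
    obtain ⟨c, hc1, hc2⟩ := tree_two_coloring hT
    have hc0 : ∀ v, c v ≠ 0 := by
      intro v
      rcases hc1 v with h | h <;> rw [h] <;> norm_num
    refine mem_spectrum_of_vec _ _ (Sum.elim c c) ?_ ?_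
    · intro h0
      exact hc0 v0 (congrFun h0 (Sum.inl v0))
    · rw [K_mulVec]
      ext (v | v)
      · have hsum : ∑ u ∈ G.neighborFinset v, c u = (G.degree v : ℂ) * (- c v) := by
          rw [Finset.sum_congr rfl
            (fun u hu => hc2 ((SimpleGraph.mem_neighborFinset G v u).mp hu))]
          simp [Finset.sum_const, SimpleGraph.card_neighborFinset_eq_degree, mul_comm]
        simp only [Sum.elim_inl, hsum, Pi.smul_apply, smul_eq_mul]
        ring
      · simp
  · -- eigenvalue 0
    obtain ⟨ℓ, hℓ⟩ := tree_exists_leaf G hT hcard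
    refine mem_spectrum_of_vec _ _
      (Sum.elim (fun _ => (0 : ℂ)) (fun v => if v = ℓ then 1 else 0)) ?_ ?_
    · intro h0
      have := congrFun h0 (Sum.inr ℓ)
      simp at this
    · rw [K_mulVec]
      ext (v | v)
      · by_cases hv : v = ℓ
        · subst hv
          simp [hℓ]
        · simp [hv]
      · simp
  · -- multiplicity of 0
    set chA : Matrix V V ℂ[X] := charmatrix (G.adjMatrix ℂ) with hchA
    set Bm : Matrix V V ℂ[X] :=
      -(((Matrix.diagonal fun v => (G.degree v : ℂ)) - 1).map C) with hBm
    set Xd : Matrix V V ℂ[X] := Matrix.diagonal fun _ => (X : ℂ[X]) with hXd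
    set B' : Matrix V V ℂ[X] := Bm - chA * Xd with hB'
    have hch : charmatrix (Kmatrix G) = fromBlocks chA Bm 1 Xd := by
      rw [Kmatrix, charmatrix_fromBlocks]
      have h1 : -((-1 : Matrix V V ℂ).map C) = (1 : Matrix V V ℂ[X]) := by
        ext i j
        by_cases h : i = j <;> simp [Matrix.map_apply, Matrix.one_apply, h]
      have h2 : charmatrix (0 : Matrix V V ℂ) = Xd := by
        ext i j
        by_cases h : i = j <;>
          simp [charmatrix_apply, h, Matrix.one_apply, Matrix.diagonal_apply, hXd]
      rw [h1, h2]
    have key : (fromBlocks 1 (-chA) 0 1) * (charmatrix (Kmatrix G)) * (fromBlocks 1 (-Xd) 0 1)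
        * (fromBlocks (0 : Matrix V V ℂ[X]) 1 1 0) = fromBlocks B' 0 0 1 := by
      rw [hch]
      simp only [Matrix.fromBlocks_multiply, Matrix.one_mul, Matrix.mul_one, Matrix.zero_mul,
        Matrix.mul_zero, Matrix.neg_mul, Matrix.mul_neg, add_zero, zero_add, neg_add_cancel,
        add_neg_cancel, Matrix.mul_one]
      rw [hB']
      abel
    set r := Fintype.card {v : V // G.degree v = 1} with hr
    have hdet1 : (fromBlocks (1 : Matrix V V ℂ[X]) (-chA) 0 1).det = 1 := by
      rw [Matrix.det_fromBlocks_zero₂₁]; simp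
    have hdet3 : (fromBlocks (1 : Matrix V V ℂ[X]) (-Xd) 0 1).det = 1 := by
      rw [Matrix.det_fromBlocks_zero₂₁]; simp
    set J : Matrix (V ⊕ V) (V ⊕ V) ℂ[X] := fromBlocks 0 1 1 0 with hJdef
    set dJ : ℂ[X] := J.det with hdJ
    have hJJ : J * J = 1 := by
      rw [hJdef]
      simp [Matrix.fromBlocks_multiply, ← Matrix.fromBlocks_one]
    have hJ2 : dJ * dJ = 1 := by
      rw [hdJ, ← Matrix.det_mul, hJJ, Matrix.det_one]
    have hdetkey := congrArg Matrix.det key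
    rw [Matrix.det_mul, Matrix.det_mul, Matrix.det_mul, hdet1, hdet3, one_mul, mul_one,
      ← hdJ, Matrix.det_fromBlocks_zero₂₁, Matrix.det_one, mul_one] at hdetkey
    have hcp : (Kmatrix G).charpoly = B'.det * dJ := by
      rw [Matrix.charpoly]
      calc (charmatrix (Kmatrix G)).det
          = (charmatrix (Kmatrix G)).det * (dJ * dJ) := by rw [hJ2, mul_one]
        _ = ((charmatrix (Kmatrix G)).det * dJ) * dJ := by ring
        _ = B'.det * dJ := by rw [hdetkey]
    set N : Matrix V V ℂ[X] := Matrix.of fun i j =>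
      if G.degree i = 1 then (C (G.adjMatrix ℂ i j) - (if i = j then (X : ℂ[X]) else 0))
      else B' i j with hN
    have hBent : B' = Matrix.of fun i j =>
        (if G.degree i = 1 then (X : ℂ[X]) else 1) * N i j := by
      ext i j
      by_cases hi : G.degree i = 1
      · by_cases hij : i = j
        · subst hij
          simp [hN, hB', hBm, hchA, hXd, Matrix.mul_diagonal, charmatrix_apply,
            Matrix.map_apply, Matrix.diagonal_apply, hi, Matrix.one_apply]
        · simp [hN, hB', hBm, hchA, hXd, Matrix.mul_diagonal, charmatrix_apply,
            Matrix.map_apply, Matrix.diagonal_apply, hi, hij, Matrix.one_apply]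
      · simp [hN, hi]
    have hdetB : B'.det = (X : ℂ[X]) ^ r * N.det := by
      rw [hBent, Matrix.det_mul_column]
      congr 1
      rw [Finset.prod_ite, Finset.prod_const, Finset.prod_const_one, mul_one, hr,
        Fintype.card_subtype]
    have hdvd : (X : ℂ[X]) ^ r ∣ (Kmatrix G).charpoly := by
      rw [hcp, hdetB]
      exact Dvd.dvd.mul_right (Dvd.dvd.mul_right dvd_rfl _) _
    have hnz : (Kmatrix G).charpoly ≠ 0 := (Matrix.charpoly_monic _).ne_zero
    rw [Polynomial.le_rootMultiplicity_iff hnz]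
    simpa using hdvd
end
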